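/- arXiv:1705.00506 — 8 statements merged into one kernel-verified Lean document; each statement's English description precedes it below -/
import Mathlib

section
/- Under consistency, positivity, unconfoundedness of the instrument, the exclusion restriction, and monotonicity, the difference in mean outcomes by instrument value satisfies E(Y | Z=1) - E(Y | Z=0) = E(Y_{a=1} - Y_{a=0} | A_{z=1} > A_{z=0}) * P(A_{z=1} > A_{z=0}). -/
open MeasureTheory ProbabilityTheory
open scoped ENNReal

/-- Conditional expectation of `f` given the event `s`: `E(f | s)`. -/
noncomputable def cexp {Ω : Type*} [MeasurableSpace Ω] (μ : Measure Ω) (f : Ω → ℝ) (s : Set Ω) : ℝ :=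
  (∫ ω in s, f ω ∂μ) / (μ s).toReal

/-- Under consistency, positivity, unconfoundedness of the instrument, the exclusion
restriction, and monotonicity:
`E(Y | Z=1) - E(Y | Z=0) = E(Y₁ - Y₀ | A_{z=1} > A_{z=0}) * P(A_{z=1} > A_{z=0})`. -/
theorem stmt0 {Ω : Type*} [MeasurableSpace Ω] (μ : Measure Ω) [IsProbabilityMeasure μ]
    (Z A A0 A1 Y Y0 Y1 Yz0 Yz1 : Ω → ℝ)
    (hZm : Measurable Z) (hAm : Measurable A) (hA0m : Measurable A0) (hA1m : Measurable A1)
    (hYm : Measurable Y) (hY0m : Measurable Y0) (hY1m : Measurable Y1)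
    (hYz0m : Measurable Yz0) (hYz1m : Measurable Yz1)
    (hZbin : ∀ ω, Z ω = 0 ∨ Z ω = 1)
    (hAbin : ∀ ω, A ω = 0 ∨ A ω = 1)
    (hA0bin : ∀ ω, A0 ω = 0 ∨ A0 ω = 1)
    (hA1bin : ∀ ω, A1 ω = 0 ∨ A1 ω = 1)
    -- consistency: A = A_z and Y = Y_z on {Z = z}
    (hcons1 : ∀ ω, Z ω = 1 → A ω = A1 ω ∧ Y ω = Yz1 ω)
    (hcons0 : ∀ ω, Z ω = 0 → A ω = A0 ω ∧ Y ω = Yz0 ω)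
    -- exclusion restriction: Y_z = Y_{A_z}, i.e. Y_{za} = Y_a
    (hexcl1 : ∀ ω, Yz1 ω = if A1 ω = 1 then Y1 ω else Y0 ω)
    (hexcl0 : ∀ ω, Yz0 ω = if A0 ω = 1 then Y1 ω else Y0 ω)
    -- positivity
    (hpos : 0 < μ {ω | Z ω = 1}) (hpos' : μ {ω | Z ω = 1} < 1)
    -- unconfoundedness of the instrument
    (hindep : IndepFun Z (fun ω => (A0 ω, A1 ω, Yz0 ω, Yz1 ω)) μ)
    -- monotonicity
    (hmono : ∀ᵐ ω ∂μ, A0 ω ≤ A1 ω)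
    -- integrability
    (hYint : Integrable Y μ) (hY0int : Integrable Y0 μ) (hY1int : Integrable Y1 μ)
    (hYz0int : Integrable Yz0 μ) (hYz1int : Integrable Yz1 μ) :
    cexp μ Y {ω | Z ω = 1} - cexp μ Y {ω | Z ω = 0} =
      cexp μ (fun ω => Y1 ω - Y0 ω) {ω | A0 ω < A1 ω} * (μ {ω | A0 ω < A1 ω}).toReal := by
  have hs1m : MeasurableSet {ω | Z ω = 1} := hZm (measurableSet_singleton 1)
  have hs0m : MeasurableSet {ω | Z ω = 0} := hZm (measurableSet_singleton 0)
  have hstm : MeasurableSet {ω | A0 ω < A1 ω} := measurableSet_lt hA0m hA1m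
  -- step: independence for Yz1 and Yz0 with the indicator of {Z = c}
  have hind : ∀ (c : ℝ) (ψ : ℝ × ℝ × ℝ × ℝ → ℝ), Measurable ψ →
      IndepFun (fun ω => if Z ω = c then (1:ℝ) else 0)
        (fun ω => ψ (A0 ω, A1 ω, Yz0 ω, Yz1 ω)) μ := by
    intro c ψ hψ
    have hφ : Measurable (fun x : ℝ => if x = c then (1:ℝ) else 0) := by
      exact Measurable.ite (measurableSet_eq) measurable_const measurable_const
    exact hindep.comp hφ hψ
  have hset : ∀ (c : ℝ) (ψ : ℝ × ℝ × ℝ × ℝ → ℝ), Measurable ψ →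
      Integrable (fun ω => ψ (A0 ω, A1 ω, Yz0 ω, Yz1 ω)) μ →
      MeasurableSet {ω | Z ω = c} →
      ∫ ω in {ω | Z ω = c}, ψ (A0 ω, A1 ω, Yz0 ω, Yz1 ω) ∂μ
        = (μ {ω | Z ω = c}).toReal * ∫ ω, ψ (A0 ω, A1 ω, Yz0 ω, Yz1 ω) ∂μ := by
    intro c ψ hψ hint hsm
    have hgint : Integrable (fun ω => if Z ω = c then (1:ℝ) else 0) μ := by
      have heq : (fun ω => if Z ω = c then (1:ℝ) else 0)
          = Set.indicator {ω | Z ω = c} (fun _ => (1:ℝ)) := by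
        funext ω; simp [Set.indicator_apply, Set.mem_setOf_eq]
      rw [heq]; exact (integrable_const (1:ℝ)).indicator hsm
    have h := IndepFun.integral_mul_eq_mul_integral (hind c ψ hψ) hgint.aestronglyMeasurable hint.aestronglyMeasurable
    have h1 : ∫ ω, (if Z ω = c then (1:ℝ) else 0) * ψ (A0 ω, A1 ω, Yz0 ω, Yz1 ω) ∂μ
        = ∫ ω in {ω | Z ω = c}, ψ (A0 ω, A1 ω, Yz0 ω, Yz1 ω) ∂μ := by
      rw [← integral_indicator hsm]
      congr 1; funext ω
      by_cases hω : Z ω = c <;> simp [Set.indicator_apply, Set.mem_setOf_eq, hω]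
    have h2 : ∫ ω, (if Z ω = c then (1:ℝ) else 0) ∂μ = (μ {ω | Z ω = c}).toReal := by
      have : (fun ω => if Z ω = c then (1:ℝ) else 0)
          = Set.indicator {ω | Z ω = c} (fun _ => (1:ℝ)) := by
        funext ω; simp [Set.indicator_apply, Set.mem_setOf_eq]
      rw [this, integral_indicator hsm]
      simp [Measure.real]
    rw [h2] at h
    rw [← h1]; exact h
  have hψ1 : Measurable (fun p : ℝ × ℝ × ℝ × ℝ => p.2.2.2) := by fun_prop
  have hψ0 : Measurable (fun p : ℝ × ℝ × ℝ × ℝ => p.2.2.1) := by fun_prop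
  have hkey1 : ∫ ω in {ω | Z ω = 1}, Yz1 ω ∂μ
      = (μ {ω | Z ω = 1}).toReal * ∫ ω, Yz1 ω ∂μ := by
    simpa using hset 1 (fun p => p.2.2.2) hψ1 hYz1int hs1m
  have hkey0 : ∫ ω in {ω | Z ω = 0}, Yz0 ω ∂μ
      = (μ {ω | Z ω = 0}).toReal * ∫ ω, Yz0 ω ∂μ := by
    simpa using hset 0 (fun p => p.2.2.1) hψ0 hYz0int hs0m
  -- consistency rewrites
  have hc1 : ∫ ω in {ω | Z ω = 1}, Y ω ∂μ = ∫ ω in {ω | Z ω = 1}, Yz1 ω ∂μ := by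
    apply setIntegral_congr_fun hs1m
    intro ω hω; exact (hcons1 ω hω).2
  have hc0 : ∫ ω in {ω | Z ω = 0}, Y ω ∂μ = ∫ ω in {ω | Z ω = 0}, Yz0 ω ∂μ := by
    apply setIntegral_congr_fun hs0m
    intro ω hω; exact (hcons0 ω hω).2
  -- measures positive
  have hs1ne : (μ {ω | Z ω = 1}).toReal ≠ 0 := by
    have := hpos.ne'
    simp [ENNReal.toReal_ne_zero, this, (measure_lt_top μ _).ne]
  have hs0pos : 0 < μ {ω | Z ω = 0} := by
    have hcomp : {ω | Z ω = 0} = {ω | Z ω = 1}ᶜ := by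
      ext ω; rcases hZbin ω with h | h <;> simp [h]
    rw [hcomp, measure_compl hs1m (measure_ne_top μ _)]
    simp only [measure_univ]
    exact tsub_pos_of_lt hpos'
  have hs0ne : (μ {ω | Z ω = 0}).toReal ≠ 0 := by
    simp [ENNReal.toReal_ne_zero, hs0pos.ne', (measure_lt_top μ _).ne]
  have hcexp1 : cexp μ Y {ω | Z ω = 1} = ∫ ω, Yz1 ω ∂μ := by
    rw [cexp, hc1, hkey1]; exact mul_div_cancel_left₀ _ hs1ne
  have hcexp0 : cexp μ Y {ω | Z ω = 0} = ∫ ω, Yz0 ω ∂μ := by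
    rw [cexp, hc0, hkey0]; exact mul_div_cancel_left₀ _ hs0ne
  rw [hcexp1, hcexp0, ← integral_sub hYz1int hYz0int]
  -- a.e. identity: Yz1 - Yz0 = indicator {A0 < A1} (Y1 - Y0)
  have hae : (fun ω => Yz1 ω - Yz0 ω)
      =ᵐ[μ] Set.indicator {ω | A0 ω < A1 ω} (fun ω => Y1 ω - Y0 ω) := by
    filter_upwards [hmono] with ω hω
    by_cases h : A0 ω < A1 ω
    · have hA0 : A0 ω = 0 := by
        rcases hA0bin ω with h0 | h0
        · exact h0
        · rcases hA1bin ω with h1 | h1 <;> simp [h0, h1] at h <;> linarith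
      have hA1 : A1 ω = 1 := by
        rcases hA1bin ω with h1 | h1
        · simp [hA0, h1] at h
        · exact h1
      simp [Set.indicator_apply, Set.mem_setOf_eq, h, hexcl1 ω, hexcl0 ω, hA0, hA1]
    · have heq : A0 ω = A1 ω := le_antisymm hω (not_lt.mp h)
      simp [Set.indicator_apply, Set.mem_setOf_eq, h, hexcl1 ω, hexcl0 ω, heq]
  rw [integral_congr_ae hae, integral_indicator hstm]
  -- conclude
  by_cases hz : μ {ω | A0 ω < A1 ω} = 0
  · rw [cexp]
    simp [hz, Measure.restrict_eq_zero.mpr hz]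
  · rw [cexp, div_mul_cancel₀]
    simp [ENNReal.toReal_ne_zero, hz, (measure_lt_top μ _).ne]
end

section
/- Under consistency, positivity, unconfoundedness, exclusion restriction, monotonicity, and instrumentation (E(A | Z=1) ≠ E(A | Z=0)), the Wald ratio Ψ^f = [E(Y|Z=1) - E(Y|Z=0)] / [E(A|Z=1) - E(A|Z=0)] equals the local average treatment effect E(Y_{a=1} - Y_{a=0} | A_{z=1} > A_{z=0}) among compliers. -/
open MeasureTheory ProbabilityTheory
open scoped ENNReal

lemma key {Ω : Type*} [MeasurableSpace Ω] (μ : Measure Ω) [IsProbabilityMeasure μ]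
    (Z W : Ω → ℝ) (hZm : Measurable Z)
    (hindep : IndepFun Z W μ) (hWint : Integrable W μ) (c : ℝ) :
    ∫ ω in {ω | Z ω = c}, W ω ∂μ = (μ {ω | Z ω = c}).toReal * ∫ ω, W ω ∂μ := by
  have hs : MeasurableSet {ω | Z ω = c} := hZm (measurableSet_singleton c)
  have hχ : IndepFun (fun ω => Set.indicator {ω | Z ω = c} (fun _ => (1:ℝ)) ω) W μ := by
    have : (fun ω => Set.indicator {ω | Z ω = c} (fun _ => (1:ℝ)) ω)
        = (fun x : ℝ => if x = c then (1:ℝ) else 0) ∘ Z := by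
      ext ω; simp [Set.indicator]
    rw [this]
    exact hindep.comp (measurable_const.ite (measurableSet_singleton c) measurable_const)
      measurable_id
  have hmul := hχ.integral_mul_eq_mul_integral
    ((integrable_indicator_iff hs).2 (integrableOn_const (measure_ne_top μ _))).aestronglyMeasurable hWint.aestronglyMeasurable
  have h1 : (fun ω => Set.indicator {ω | Z ω = c} (fun _ => (1:ℝ)) ω) * W
      = Set.indicator {ω | Z ω = c} W := by
    ext ω; by_cases h : Z ω = c <;> simp [Set.indicator, h]
  rw [h1, integral_indicator hs] at hmul
  rw [hmul, integral_indicator hs, setIntegral_const, smul_eq_mul, mul_one]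
  rfl
/-- Under consistency, positivity, unconfoundedness, exclusion restriction, monotonicity,
and instrumentation, the Wald ratio
`Ψᶠ = [E(Y|Z=1) - E(Y|Z=0)] / [E(A|Z=1) - E(A|Z=0)]` equals the local average treatment
effect `E(Y₁ - Y₀ | A_{z=1} > A_{z=0})` among compliers. -/
theorem stmt2 {Ω : Type*} [MeasurableSpace Ω] (μ : Measure Ω) [IsProbabilityMeasure μ]
    (Z A A0 A1 Y Y0 Y1 Yz0 Yz1 : Ω → ℝ)
    (hZm : Measurable Z) (hAm : Measurable A) (hA0m : Measurable A0) (hA1m : Measurable A1)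
    (hYm : Measurable Y) (hY0m : Measurable Y0) (hY1m : Measurable Y1)
    (hYz0m : Measurable Yz0) (hYz1m : Measurable Yz1)
    (hZbin : ∀ ω, Z ω = 0 ∨ Z ω = 1)
    (hAbin : ∀ ω, A ω = 0 ∨ A ω = 1)
    (hA0bin : ∀ ω, A0 ω = 0 ∨ A0 ω = 1)
    (hA1bin : ∀ ω, A1 ω = 0 ∨ A1 ω = 1)
    -- consistency: A = A_z and Y = Y_z = Y_{a=A_z} on {Z = z}
    (hcons1 : ∀ ω, Z ω = 1 → A ω = A1 ω ∧ Y ω = Yz1 ω)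
    (hcons0 : ∀ ω, Z ω = 0 → A ω = A0 ω ∧ Y ω = Yz0 ω)
    -- exclusion restriction: Y_{za} = Y_a, i.e. Y_z = Y_{A_z}
    (hexcl1 : ∀ ω, Yz1 ω = if A1 ω = 1 then Y1 ω else Y0 ω)
    (hexcl0 : ∀ ω, Yz0 ω = if A0 ω = 1 then Y1 ω else Y0 ω)
    -- positivity
    (hpos : 0 < μ {ω | Z ω = 1}) (hpos' : μ {ω | Z ω = 1} < 1)
    -- instrumentation: P(A_{z=1}=1) ≠ P(A_{z=0}=1)
    (hinstr : μ {ω | A1 ω = 1} ≠ μ {ω | A0 ω = 1})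
    -- unconfoundedness of the instrument
    (hindep : IndepFun Z (fun ω => (A0 ω, A1 ω, Yz0 ω, Yz1 ω)) μ)
    -- monotonicity
    (hmono : ∀ᵐ ω ∂μ, A0 ω ≤ A1 ω)
    -- integrability
    (hYint : Integrable Y μ) (hY0int : Integrable Y0 μ) (hY1int : Integrable Y1 μ)
    (hYz0int : Integrable Yz0 μ) (hYz1int : Integrable Yz1 μ) :
    (cexp μ Y {ω | Z ω = 1} - cexp μ Y {ω | Z ω = 0}) /
        (cexp μ A {ω | Z ω = 1} - cexp μ A {ω | Z ω = 0}) =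
      cexp μ (fun ω => Y1 ω - Y0 ω) {ω | A0 ω < A1 ω} := by

  have hs1 : MeasurableSet {ω | Z ω = 1} := hZm (measurableSet_singleton 1)
  have hs0 : MeasurableSet {ω | Z ω = 0} := hZm (measurableSet_singleton 0)
  have hp1 : (μ {ω | Z ω = 1}).toReal ≠ 0 :=
    ENNReal.toReal_ne_zero.2 ⟨hpos.ne', measure_ne_top μ _⟩
  have hset0 : {ω | Z ω = 0} = {ω | Z ω = 1}ᶜ := by
    ext ω; rcases hZbin ω with h | h <;> simp [h]
  have hp0 : (μ {ω | Z ω = 0}).toReal ≠ 0 := by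
    rw [hset0, measure_compl hs1 (measure_ne_top μ _), measure_univ]
    refine ENNReal.toReal_ne_zero.2 ⟨?_, (tsub_le_self.trans_lt (by simp : (1:ℝ≥0∞) < ⊤)).ne⟩
    exact (tsub_pos_of_lt hpos').ne'
  -- integrability of A0, A1
  have hA1i : Integrable A1 μ :=
    (integrable_const (1:ℝ)).mono' hA1m.aestronglyMeasurable
      (ae_of_all _ fun ω => by rcases hA1bin ω with h | h <;> simp [h])
  have hA0i : Integrable A0 μ :=
    (integrable_const (1:ℝ)).mono' hA0m.aestronglyMeasurable
      (ae_of_all _ fun ω => by rcases hA0bin ω with h | h <;> simp [h])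
  -- independence of Z with each coordinate
  have hiA0 : IndepFun Z A0 μ := hindep.comp measurable_id measurable_fst
  have hiA1 : IndepFun Z A1 μ := hindep.comp measurable_id (measurable_fst.comp measurable_snd)
  have hiYz0 : IndepFun Z Yz0 μ :=
    hindep.comp measurable_id (measurable_fst.comp (measurable_snd.comp measurable_snd))
  have hiYz1 : IndepFun Z Yz1 μ :=
    hindep.comp measurable_id (measurable_snd.comp (measurable_snd.comp measurable_snd))
  -- the four conditional expectations
  have hc1 : cexp μ Y {ω | Z ω = 1} = ∫ ω, Yz1 ω ∂μ := by
    unfold cexp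
    rw [setIntegral_congr_fun hs1 (fun ω hω => (hcons1 ω hω).2),
      key μ Z Yz1 hZm hiYz1 hYz1int 1]
    exact mul_div_cancel_left₀ _ hp1
  have hc0 : cexp μ Y {ω | Z ω = 0} = ∫ ω, Yz0 ω ∂μ := by
    unfold cexp
    rw [setIntegral_congr_fun hs0
      (fun ω hω => (hcons0 ω hω).2),
      key μ Z Yz0 hZm hiYz0 hYz0int 0]
    exact mul_div_cancel_left₀ _ hp0
  have hcA1 : cexp μ A {ω | Z ω = 1} = ∫ ω, A1 ω ∂μ := by
    unfold cexp
    rw [setIntegral_congr_fun hs1 (fun ω hω => (hcons1 ω hω).1),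
      key μ Z A1 hZm hiA1 hA1i 1]
    exact mul_div_cancel_left₀ _ hp1
  have hcA0 : cexp μ A {ω | Z ω = 0} = ∫ ω, A0 ω ∂μ := by
    unfold cexp
    rw [setIntegral_congr_fun hs0
      (fun ω hω => (hcons0 ω hω).1),
      key μ Z A0 hZm hiA0 hA0i 0]
    exact mul_div_cancel_left₀ _ hp0
  have hsC : MeasurableSet {ω | A0 ω < A1 ω} := measurableSet_lt hA0m hA1m
  -- numerator
  have hnum : (∫ ω, Yz1 ω ∂μ) - ∫ ω, Yz0 ω ∂μ
      = ∫ ω in {ω | A0 ω < A1 ω}, (Y1 ω - Y0 ω) ∂μ := by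
    rw [← integral_sub hYz1int hYz0int, ← integral_indicator hsC]
    refine integral_congr_ae ?_
    filter_upwards [hmono] with ω hω
    rcases hA0bin ω with h0 | h0 <;> rcases hA1bin ω with h1 | h1
    · simp [hexcl1 ω, hexcl0 ω, h0, h1, Set.indicator]
    · simp [hexcl1 ω, hexcl0 ω, h0, h1, Set.indicator]
    · rw [h0, h1] at hω; norm_num at hω
    · simp [hexcl1 ω, hexcl0 ω, h0, h1, Set.indicator]
  -- denominator
  have hden : (∫ ω, A1 ω ∂μ) - ∫ ω, A0 ω ∂μ = (μ {ω | A0 ω < A1 ω}).toReal := by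
    rw [← integral_sub hA1i hA0i]
    have : (fun ω => A1 ω - A0 ω)
        =ᵐ[μ] Set.indicator {ω | A0 ω < A1 ω} (fun _ => (1:ℝ)) := by
      filter_upwards [hmono] with ω hω
      rcases hA0bin ω with h0 | h0 <;> rcases hA1bin ω with h1 | h1
      · simp [Set.indicator, h0, h1]
      · simp [Set.indicator, h0, h1]
      · rw [h0, h1] at hω; norm_num at hω
      · simp [Set.indicator, h0, h1]
    rw [integral_congr_ae this, integral_indicator hsC, setIntegral_const, smul_eq_mul, mul_one]
    rfl
  rw [hc1, hc0, hcA1, hcA0, hnum, hden]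
  unfold cexp
  rfl
end

section
/- Let D be a square-integrable random variable with E[D] = 0, and let R be a binary indicator independent of the pair (A, Y) and of D with P(R=1) = p ∈ (0,1]. Define D* = (R/p)(D − E[D | A,Y]) + E[D | A,Y]. Then Var(D*) = Var(D)/p − ((1−p)/p) · Var(E[D | A,Y]). -/
open MeasureTheory ProbabilityTheory
open scoped ENNReal

/-- The σ-algebra generated by the pair `(A, Y)`. -/
def sigmaAY {Ω : Type*} (A Y : Ω → ℝ) : MeasurableSpace Ω :=
  MeasurableSpace.comap (fun ω => (A ω, Y ω)) inferInstance

/-- Product of two L² functions is integrable. -/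
lemma integrable_mul_of_memℒp_two {Ω : Type*} [MeasurableSpace Ω] {μ : Measure Ω}
    {f g : Ω → ℝ} (hf : MemLp f 2 μ) (hg : MemLp g 2 μ) :
    Integrable (fun ω => f ω * g ω) μ := by
  have hint : Integrable (fun ω => (f ω ^ 2 + g ω ^ 2) / 2) μ := by
    have h := hf.integrable_sq.add hg.integrable_sq
    exact h.div_const 2
  refine Integrable.mono' hint (hf.aestronglyMeasurable.mul hg.aestronglyMeasurable)
    (Filter.Eventually.of_forall fun ω => ?_)
  rw [Real.norm_eq_abs, abs_mul]
  nlinarith [sq_nonneg (|f ω| - |g ω|), sq_abs (f ω), sq_abs (g ω),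
    abs_nonneg (f ω), abs_nonneg (g ω)]

/-- Conditional expectation preserves membership in L². -/
lemma memℒp_two_condexp {Ω : Type*} {m m0 : MeasurableSpace Ω} (hm : m ≤ m0)
    {μ : Measure Ω} [IsFiniteMeasure μ] {f : Ω → ℝ} (hf : MemLp f 2 μ) :
    MemLp (μ[f|m]) 2 μ := by
  haveI : SigmaFinite (μ.trim hm) := inferInstance
  have hg : ((condExpL2 ℝ ℝ hm (hf.toLp f) : Lp ℝ 2 μ) : Ω → ℝ) =ᵐ[μ] μ[f|m] := by
    refine ae_eq_condExp_of_forall_setIntegral_eq hm (hf.integrable one_le_two)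
      (fun s _ _ => (integrableOn_condExpL2_of_measure_ne_top hm (measure_ne_top μ s) _))
      (fun s hs hμs => ?_) (aestronglyMeasurable_condExpL2 hm _)
    rw [integral_condExpL2_eq hm (hf.toLp f) hs hμs.ne]
    exact setIntegral_congr_ae (hm s hs) ((hf.coeFn_toLp).mono fun x hx _ => hx)
  exact (Lp.memLp _).ae_eq hg

/-- If `D` is square-integrable with `E[D] = 0` and `R` is a binary indicator independent of
`(A, Y, D)` with `P(R=1) = p ∈ (0,1]`, and `D* = (R/p)(D − E[D|A,Y]) + E[D|A,Y]`, then
`Var(D*) = Var(D)/p − ((1−p)/p)·Var(E[D|A,Y])`. -/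
theorem stmt6 {Ω : Type*} [MeasurableSpace Ω] (μ : Measure Ω) [IsProbabilityMeasure μ]
    (A Y D R : Ω → ℝ)
    (hAm : Measurable A) (hYm : Measurable Y) (hDm : Measurable D) (hRm : Measurable R)
    (hD2 : MemLp D 2 μ) (hDmean : ∫ ω, D ω ∂μ = 0)
    (hRbin : ∀ ω, R ω = 0 ∨ R ω = 1)
    (hindep : IndepFun R (fun ω => (A ω, Y ω, D ω)) μ)
    (p : ℝ) (hp : p = (μ {ω | R ω = 1}).toReal) (hppos : 0 < p) (hple : p ≤ 1)
    (Dstar : Ω → ℝ)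
    (hDstar : Dstar = fun ω =>
      (R ω / p) * (D ω - (μ[D | sigmaAY A Y]) ω) + (μ[D | sigmaAY A Y]) ω) :
    variance Dstar μ =
      variance D μ / p - ((1 - p) / p) * variance (μ[D | sigmaAY A Y]) μ := by
  have hle : sigmaAY A Y ≤ ‹MeasurableSpace Ω› := (hAm.prodMk hYm).comap_le
  haveI : SigmaFinite (μ.trim hle) := inferInstance
  set M := μ[D | sigmaAY A Y] with hMdef
  have hMsm : StronglyMeasurable[sigmaAY A Y] M := stronglyMeasurable_condExp
  have hMm : Measurable M := hMsm.measurable.mono hle le_rfl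
  have hM2 : MemLp M 2 μ := memℒp_two_condexp hle hD2
  have hM1 : Integrable M μ := integrable_condExp
  have hD1 : Integrable D μ := hD2.integrable one_le_two
  have hMmean : ∫ ω, M ω ∂μ = 0 := by
    rw [hMdef, integral_condExp hle]; exact hDmean
  -- pull-out property : ∫ M·D = ∫ M·M
  have hMD_int : Integrable (fun ω => M ω * D ω) μ := integrable_mul_of_memℒp_two hM2 hD2
  have hMM_int : Integrable (fun ω => M ω * M ω) μ := integrable_mul_of_memℒp_two hM2 hM2
  have hDD_int : Integrable (fun ω => D ω * D ω) μ := integrable_mul_of_memℒp_two hD2 hD2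
  have hpull : μ[M * D | sigmaAY A Y] =ᵐ[μ] fun ω => M ω * M ω := by
    have h := condExp_mul_of_stronglyMeasurable_left hMsm hMD_int hD1
    rw [← hMdef] at h
    exact h
  have hMD : ∫ ω, M ω * D ω ∂μ = ∫ ω, M ω * M ω ∂μ := by
    have h1 : ∫ ω, (M * D) ω ∂μ = ∫ ω, (μ[M * D | sigmaAY A Y]) ω ∂μ :=
      (integral_condExp hle).symm
    have h2 : ∫ ω, (μ[M * D | sigmaAY A Y]) ω ∂μ = ∫ ω, M ω * M ω ∂μ :=
      integral_congr_ae hpull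
    simpa using h1.trans h2
  -- independence facts
  set φ := fun ω => (A ω, Y ω, D ω) with hφdef
  have hMσ : Measurable[MeasurableSpace.comap φ inferInstance] M := by
    have hpair : Measurable[MeasurableSpace.comap φ inferInstance] fun ω => (A ω, Y ω) := by
      have h : (fun ω => (A ω, Y ω)) = (fun x : ℝ × ℝ × ℝ => (x.1, x.2.1)) ∘ φ := rfl
      rw [h]
      exact (measurable_fst.prodMk (measurable_fst.comp measurable_snd)).comp
        (comap_measurable φ)
    exact hMsm.measurable.mono hpair.comap_le le_rfl
  have hDσ : Measurable[MeasurableSpace.comap φ inferInstance] D :=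
    (measurable_snd.comp measurable_snd).comp (comap_measurable φ)
  have key : ∀ Z : Ω → ℝ, Measurable[MeasurableSpace.comap φ inferInstance] Z →
      IndepFun R Z μ := by
    intro Z hZ
    rw [indepFun_iff_measure_inter_preimage_eq_mul] at hindep ⊢
    intro s t hs ht
    obtain ⟨t', ht', heq⟩ := hZ ht
    rw [← heq]
    exact hindep s t' hs ht'
  -- expectation of R
  have hRset : MeasurableSet {ω | R ω = 1} := hRm (measurableSet_singleton 1)
  have hRind : R = Set.indicator {ω | R ω = 1} fun _ => (1 : ℝ) := by
    funext ω; rcases hRbin ω with h | h <;> simp [Set.indicator_apply, h]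
  have hRint : Integrable R μ := by
    rw [hRind]; exact (integrable_const 1).indicator hRset
  have hRmean : ∫ ω, R ω ∂μ = p := by
    rw [hp]
    conv_lhs => rw [hRind]
    rw [integral_indicator_const (1 : ℝ) hRset]
    simp [Measure.real]
  -- product integrals with R
  have hεεm : Measurable[MeasurableSpace.comap φ inferInstance]
      fun ω => (D ω - M ω) * (D ω - M ω) := (hDσ.sub hMσ).mul (hDσ.sub hMσ)
  have hεMm : Measurable[MeasurableSpace.comap φ inferInstance]
      fun ω => (D ω - M ω) * M ω := (hDσ.sub hMσ).mul hMσ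
  have hεε_int : Integrable (fun ω => (D ω - M ω) * (D ω - M ω)) μ :=
    integrable_mul_of_memℒp_two (hD2.sub hM2) (hD2.sub hM2)
  have hεM_int : Integrable (fun ω => (D ω - M ω) * M ω) μ :=
    integrable_mul_of_memℒp_two (hD2.sub hM2) hM2
  have hRεε : ∫ ω, R ω * ((D ω - M ω) * (D ω - M ω)) ∂μ =
      p * ∫ ω, (D ω - M ω) * (D ω - M ω) ∂μ := by
    have h := (key _ hεεm).integral_mul_eq_mul_integral hRint.aestronglyMeasurable hεε_int.aestronglyMeasurable
    rw [hRmean] at h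
    exact h
  have hRεM : ∫ ω, R ω * ((D ω - M ω) * M ω) ∂μ =
      p * ∫ ω, (D ω - M ω) * M ω ∂μ := by
    have h := (key _ hεMm).integral_mul_eq_mul_integral hRint.aestronglyMeasurable hεM_int.aestronglyMeasurable
    rw [hRmean] at h
    exact h
  -- D·M integral via symmetry, and ε·M integral vanishes
  have hDM : ∫ ω, D ω * M ω ∂μ = ∫ ω, M ω * M ω ∂μ := by
    rw [← hMD]; congr 1; funext ω; ring
  have hεM0 : ∫ ω, (D ω - M ω) * M ω ∂μ = 0 := by
    have h : (fun ω => (D ω - M ω) * M ω) = fun ω => D ω * M ω - M ω * M ω := by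
      funext ω; ring
    rw [h, integral_sub (by simpa [mul_comm] using hMD_int) hMM_int, hDM, sub_self]
  have hεε : ∫ ω, (D ω - M ω) * (D ω - M ω) ∂μ =
      ∫ ω, D ω * D ω ∂μ - ∫ ω, M ω * M ω ∂μ := by
    have h : (fun ω => (D ω - M ω) * (D ω - M ω)) =
        fun ω => D ω * D ω - (M ω * D ω + ((D ω - M ω) * M ω)) := by
      funext ω; ring
    have hsum_int : Integrable (fun ω => M ω * D ω + (D ω - M ω) * M ω) μ :=
      hMD_int.add hεM_int
    rw [h, integral_sub hDD_int hsum_int, integral_add hMD_int hεM_int,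
      hεM0, hMD, add_zero]
  -- properties of Dstar
  have hDstar2 : MemLp Dstar 2 μ := by
    rw [hDstar]
    refine MemLp.add ?_ hM2
    refine MemLp.of_le_mul (c := 1 / p) (hD2.sub hM2)
      (((hRm.div_const p).mul (hDm.sub hMm)).aestronglyMeasurable) ?_
    · refine Filter.Eventually.of_forall fun ω => ?_
      have : |R ω / p| ≤ 1 / p := by
        rcases hRbin ω with h | h <;> rw [h] <;>
          simp [abs_of_nonneg, le_of_lt hppos, one_div_nonneg.mpr hppos.le]
      calc ‖R ω / p * (D ω - M ω)‖ = |R ω / p| * ‖D ω - M ω‖ := by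
            rw [norm_mul]; rfl
        _ ≤ (1 / p) * ‖D ω - M ω‖ := by
            exact mul_le_mul_of_nonneg_right this (norm_nonneg _)
  -- mean of Dstar
  have hεm : Measurable[MeasurableSpace.comap φ inferInstance] fun ω => D ω - M ω :=
    hDσ.sub hMσ
  have hε_int : Integrable (fun ω => D ω - M ω) μ := hD1.sub hM1
  have hRε : ∫ ω, R ω * (D ω - M ω) ∂μ = p * ∫ ω, (D ω - M ω) ∂μ := by
    have h := (key _ hεm).integral_mul_eq_mul_integral hRint.aestronglyMeasurable hε_int.aestronglyMeasurable
    rw [hRmean] at h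
    exact h
  have hε0 : ∫ ω, (D ω - M ω) ∂μ = 0 := by
    rw [integral_sub hD1 hM1, hDmean, hMmean, sub_self]
  have hRε_int : Integrable (fun ω => R ω * (D ω - M ω)) μ :=
    (key _ hεm).integrable_mul hRint hε_int
  have hRεε_int : Integrable (fun ω => R ω * ((D ω - M ω) * (D ω - M ω))) μ :=
    (key _ hεεm).integrable_mul hRint hεε_int
  have hRεM_int : Integrable (fun ω => R ω * ((D ω - M ω) * M ω)) μ :=
    (key _ hεMm).integrable_mul hRint hεM_int
  have hDstar_mean : ∫ ω, Dstar ω ∂μ = 0 := by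
    rw [hDstar]
    have h : (fun ω => R ω / p * (D ω - M ω) + M ω) =
        fun ω => (1 / p) * (R ω * (D ω - M ω)) + M ω := by
      funext ω; field_simp
    rw [h, integral_add ((hRε_int.const_mul _)) hM1, integral_const_mul, hRε, hε0, hMmean]
    ring
  -- square of Dstar
  have hsq : (fun ω => Dstar ω ^ 2) =
      fun ω => (1 / p ^ 2) * (R ω * ((D ω - M ω) * (D ω - M ω))) +
        (2 / p) * (R ω * ((D ω - M ω) * M ω)) + M ω * M ω := by
    funext ω
    rcases hRbin ω with h | h <;> simp only [hDstar, h] <;> field_simp <;> ring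
  have hDstar_sq : ∫ ω, Dstar ω ^ 2 ∂μ =
      (1 / p) * (∫ ω, D ω * D ω ∂μ - ∫ ω, M ω * M ω ∂μ) + ∫ ω, M ω * M ω ∂μ := by
    have h1 : Integrable (fun ω => (1 / p ^ 2) * (R ω * ((D ω - M ω) * (D ω - M ω)))) μ :=
      hRεε_int.const_mul _
    have h2 : Integrable (fun ω => (2 / p) * (R ω * ((D ω - M ω) * M ω))) μ :=
      hRεM_int.const_mul _
    have h12 : Integrable (fun ω => (1 / p ^ 2) * (R ω * ((D ω - M ω) * (D ω - M ω))) +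
        (2 / p) * (R ω * ((D ω - M ω) * M ω))) μ := h1.add h2
    rw [hsq, integral_add h12 hMM_int, integral_add h1 h2,
      integral_const_mul, integral_const_mul, hRεε, hRεM, hεM0, hεε]
    have hp0 : p ≠ 0 := ne_of_gt hppos
    field_simp
    ring
  -- final computation
  have hVD : variance D μ = ∫ ω, D ω * D ω ∂μ := by
    rw [variance_eq_sub hD2]
    simp only [Pi.pow_apply]
    rw [hDmean]
    norm_num
    exact integral_congr_ae (Filter.Eventually.of_forall fun ω => pow_two (D ω))
  have hVM : variance M μ = ∫ ω, M ω * M ω ∂μ := by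
    rw [variance_eq_sub hM2]
    simp only [Pi.pow_apply]
    rw [hMmean]
    norm_num
    exact integral_congr_ae (Filter.Eventually.of_forall fun ω => pow_two (M ω))
  have hVDstar : variance Dstar μ =
      (1 / p) * (∫ ω, D ω * D ω ∂μ - ∫ ω, M ω * M ω ∂μ) + ∫ ω, M ω * M ω ∂μ := by
    rw [variance_eq_sub hDstar2]
    simp only [Pi.pow_apply]
    rw [hDstar_sq, hDstar_mean]
    ring
  rw [hVDstar, hVD, hVM]
  have hp0 : p ≠ 0 := ne_of_gt hppos
  field_simp
  ring
end

section
/- The complete-case variance Var(R·D/p) = Var(D)/p exceeds the MCAR efficiency bound Var(D*) = Var(D)/p − ((1−p)/p)Var(E[D|A,Y]) strictly, unless E[D | A,Y] is almost surely constant (equal to 0) or p = 1. -/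
open MeasureTheory ProbabilityTheory
open scoped ENNReal

/-- Conditional expectation of an `L²` function is in `L²`. -/
lemma memℒp_two_condexp_aux {Ω : Type*} {m m0 : MeasurableSpace Ω} (hm : m ≤ m0)
    (μ : Measure Ω) [IsFiniteMeasure μ] {f : Ω → ℝ} (hf : MemLp f 2 μ) :
    MemLp (μ[f|m]) 2 μ := by
  haveI : SigmaFinite (μ.trim hm) := by
    haveI := isFiniteMeasure_trim (μ := μ) hm
    infer_instance
  set fL : Lp ℝ 2 μ := hf.toLp f with hfL
  have hG : AEStronglyMeasurable[m] (condExpL2 ℝ ℝ hm fL : Ω → ℝ) μ :=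
    aestronglyMeasurable_condExpL2 hm fL
  have hGi : Integrable (condExpL2 ℝ ℝ hm fL : Ω → ℝ) μ :=
    integrable_condExpL2_of_isFiniteMeasure hm
  have heq : (condExpL2 ℝ ℝ hm fL : Ω → ℝ) =ᵐ[μ] μ[f|m] := by
    refine ae_eq_condExp_of_forall_setIntegral_eq hm (hf.integrable one_le_two)
      (fun s _ _ => hGi.integrableOn) (fun s hs hμs => ?_) hG
    rw [integral_condExpL2_eq hm fL hs hμs.ne]
    refine setIntegral_congr_ae (hm s hs) ?_
    exact (hf.coeFn_toLp).mono fun x hx _ => hx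
  exact (Lp.memLp _).ae_eq heq

/-- With `p = P(R=1) ∈ (0,1)`, the complete-case variance `Var(R·D/p) = Var(D)/p` strictly
exceeds the MCAR efficiency bound `Var(D*)` unless `E[D|A,Y]` is almost surely constant
(equal to `0`). -/
theorem stmt9 {Ω : Type*} [MeasurableSpace Ω] (μ : Measure Ω) [IsProbabilityMeasure μ]
    (A Y D R : Ω → ℝ)
    (hAm : Measurable A) (hYm : Measurable Y) (hDm : Measurable D) (hRm : Measurable R)
    (hD2 : MemLp D 2 μ) (hDmean : ∫ ω, D ω ∂μ = 0)
    (hRbin : ∀ ω, R ω = 0 ∨ R ω = 1)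
    (hindep : IndepFun R (fun ω => (A ω, Y ω, D ω)) μ)
    (p : ℝ) (hp : p = (μ {ω | R ω = 1}).toReal) (hppos : 0 < p) (hplt : p < 1)
    (Dstar : Ω → ℝ)
    (hDstar : Dstar = fun ω =>
      (R ω / p) * (D ω - (μ[D | sigmaAY A Y]) ω) + (μ[D | sigmaAY A Y]) ω)
    -- E[D | A,Y] is not almost surely constant (equal to 0)
    (hnc : ¬ (μ[D | sigmaAY A Y] =ᵐ[μ] fun _ => (0 : ℝ))) :
    variance Dstar μ < variance (fun ω => R ω * D ω / p) μ := by
  have hp0 : p ≠ 0 := ne_of_gt hppos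
  have hm : sigmaAY A Y ≤ ‹MeasurableSpace Ω› := measurable_iff_comap_le.mp (hAm.prodMk hYm)
  haveI : SigmaFinite (μ.trim hm) := by
    haveI := isFiniteMeasure_trim (μ := μ) hm
    infer_instance
  set g : Ω → ℝ := μ[D | sigmaAY A Y] with hgdef
  have hgsm : StronglyMeasurable[sigmaAY A Y] g := stronglyMeasurable_condExp
  have hgm : Measurable g := (hgsm.measurable).mono hm le_rfl
  have hD1 : Integrable D μ := hD2.integrable one_le_two
  have hg1 : Integrable g μ := integrable_condExp
  have hg2 : MemLp g 2 μ := memℒp_two_condexp_aux hm μ hD2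
  have hEg : ∫ ω, g ω ∂μ = 0 := by
    rw [hgdef, integral_condExp hm]; exact hDmean
  set e : Ω → ℝ := fun ω => D ω - g ω with hedef
  have hem : Measurable e := hDm.sub hgm
  have he2 : MemLp e 2 μ := hD2.sub hg2
  have he1 : Integrable e μ := he2.integrable one_le_two
  have hEe : ∫ ω, e ω ∂μ = 0 := by
    rw [hedef]
    simp only []
    rw [integral_sub hD1 hg1, hDmean, hEg, sub_zero]
  -- product of two L² functions is integrable
  have hmul : ∀ {u v : Ω → ℝ}, MemLp u 2 μ → MemLp v 2 μ →
      Integrable (fun ω => u ω * v ω) μ := by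
    intro u v hu hv
    have h := hv.smul (r := 1) hu (hpqr := ⟨by rw [inv_one]; exact ENNReal.inv_two_add_inv_two⟩)
    exact memLp_one_iff_integrable.mp h
  -- orthogonality
  have hor : ∫ ω, g ω * D ω ∂μ = ∫ ω, g ω * g ω ∂μ := by
    have hpull : μ[(g * D) | sigmaAY A Y] =ᵐ[μ] g * μ[D | sigmaAY A Y] :=
      condExp_mul_of_stronglyMeasurable_left hgsm (hmul hg2 hD2) hD1
    calc ∫ ω, g ω * D ω ∂μ = ∫ ω, (μ[(g * D) | sigmaAY A Y]) ω ∂μ := (integral_condExp hm).symm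
      _ = ∫ ω, (g * μ[D | sigmaAY A Y]) ω ∂μ := integral_congr_ae hpull
      _ = ∫ ω, g ω * g ω ∂μ := rfl
  have heg : ∫ ω, e ω * g ω ∂μ = 0 := by
    have hfun : (fun ω => e ω * g ω) = fun ω => g ω * D ω - g ω * g ω := by
      funext ω; simp only [hedef]; ring
    rw [hfun, integral_sub (hmul hg2 hD2) (hmul hg2 hg2), hor, sub_self]
  -- Pythagoras
  have hpyth : ∫ ω, D ω * D ω ∂μ = ∫ ω, e ω * e ω ∂μ + ∫ ω, g ω * g ω ∂μ := by
    have hfun : (fun ω => D ω * D ω)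
        = fun ω => (e ω * e ω + g ω * g ω) + 2 * (e ω * g ω) := by
      funext ω; simp only [hedef]; ring
    have hI : Integrable (fun ω => e ω * e ω + g ω * g ω) μ := (hmul he2 he2).add (hmul hg2 hg2)
    rw [hfun, integral_add hI ((hmul he2 hg2).const_mul 2),
      integral_add (hmul he2 he2) (hmul hg2 hg2), integral_const_mul, heg]
    ring
  -- facts about R
  have hR01 : ∀ ω, R ω * R ω = R ω := fun ω => by
    rcases hRbin ω with h | h <;> rw [h] <;> ring
  have hRbdd : ∀ ω, ‖R ω‖ ≤ 1 := fun ω => by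
    rcases hRbin ω with h | h <;> simp [h]
  have hRset : MeasurableSet {ω | R ω = 1} := hRm (measurableSet_singleton 1)
  have hRind : R = Set.indicator {ω | R ω = 1} (fun _ => (1 : ℝ)) := by
    funext ω
    rcases hRbin ω with h | h
    · rw [Set.indicator_of_notMem (by simp [Set.mem_setOf_eq, h]), h]
    · rw [Set.indicator_of_mem (by simpa [Set.mem_setOf_eq] using h), h]
  have hRint : Integrable R μ := by
    rw [hRind]; exact (integrable_const (1 : ℝ)).indicator hRset
  have hER : ∫ ω, R ω ∂μ = p := by
    rw [hRind, hp, integral_indicator hRset, setIntegral_const, smul_eq_mul, mul_one]; rfl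
  -- independence helper
  set T : Ω → ℝ × ℝ × ℝ := fun ω => (A ω, Y ω, D ω) with hTdef
  have hInd : ∀ (X : Ω → ℝ), Measurable[MeasurableSpace.comap T inferInstance] X → IndepFun R X μ := by
    intro X hX
    rw [IndepFun_iff_Indep] at hindep ⊢
    exact indep_of_indep_of_le_right hindep (measurable_iff_comap_le.mp hX)
  have hTm : Measurable[MeasurableSpace.comap T inferInstance] T := comap_measurable T
  have hDT : Measurable[MeasurableSpace.comap T inferInstance] D := (measurable_snd.comp measurable_snd).comp hTm
  have hmle : sigmaAY A Y ≤ MeasurableSpace.comap T inferInstance := by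
    intro s hs
    obtain ⟨t, ht, rfl⟩ := hs
    exact ⟨(fun x : ℝ × ℝ × ℝ => (x.1, x.2.1)) ⁻¹' t,
      (measurable_fst.prodMk (measurable_fst.comp measurable_snd)) ht, rfl⟩
  have hgT : Measurable[MeasurableSpace.comap T inferInstance] g := (hgsm.measurable).mono hmle le_rfl
  have heT : Measurable[MeasurableSpace.comap T inferInstance] e := hDT.sub hgT
  -- integral identities via independence
  have hint : ∀ (X : Ω → ℝ), Measurable[MeasurableSpace.comap T inferInstance] X → Integrable X μ →
      ∫ ω, R ω * X ω ∂μ = p * ∫ ω, X ω ∂μ := by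
    intro X hX hXi
    have h := (hInd X hX).integral_mul_eq_mul_integral hRint.aestronglyMeasurable hXi.aestronglyMeasurable
    have h2 : ∫ ω, R ω * X ω ∂μ = (∫ ω, R ω ∂μ) * ∫ ω, X ω ∂μ := h
    rw [h2, hER]
  -- complete-case variance
  set CC : Ω → ℝ := fun ω => R ω * D ω / p with hCC
  have hRD2mem : MemLp (fun ω => R ω * D ω) 2 μ := by
    refine MemLp.of_le hD2 ((hRm.mul hDm).aestronglyMeasurable) (ae_of_all _ fun ω => ?_)
    rw [norm_mul]
    calc ‖R ω‖ * ‖D ω‖ ≤ 1 * ‖D ω‖ := by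
          exact mul_le_mul_of_nonneg_right (hRbdd ω) (norm_nonneg _)
      _ = ‖D ω‖ := one_mul _
  have hCC2 : MemLp CC 2 μ := by
    have : CC = fun ω => p⁻¹ * (R ω * D ω) := by funext ω; rw [hCC]; ring
    rw [this]
    exact hRD2mem.const_mul p⁻¹
  have hECC : ∫ ω, CC ω ∂μ = 0 := by
    have : ∫ ω, CC ω ∂μ = (∫ ω, R ω * D ω ∂μ) / p := by
      rw [hCC, integral_div]
    rw [this, hint D hDT hD1, hDmean, mul_zero, zero_div]
  have hECC2 : ∫ ω, CC ω ^ 2 ∂μ = (∫ ω, D ω * D ω ∂μ) / p := by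
    have hfun : (fun ω => CC ω ^ 2) = fun ω => (R ω * (D ω * D ω)) / p ^ 2 := by
      funext ω
      rw [hCC]
      have h := hR01 ω
      field_simp
      linear_combination (D ω * D ω) * h
    rw [hfun, integral_div, hint (fun ω => D ω * D ω) (hDT.mul hDT) (hmul hD2 hD2)]
    field_simp
  have hvarCC : variance CC μ = (∫ ω, D ω * D ω ∂μ) / p := by
    rw [variance_eq_sub hCC2]
    simp only [Pi.pow_apply]
    rw [hECC2, hECC]
    ring
  -- Dstar variance
  have hDstar' : Dstar = fun ω => (R ω / p) * e ω + g ω := by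
    rw [hDstar]
  have hterm1 : MemLp (fun ω => (R ω / p) * e ω) 2 μ := by
    refine MemLp.of_le (he2.const_mul p⁻¹) (((hRm.div_const p).mul hem).aestronglyMeasurable)
      (ae_of_all _ fun ω => ?_)
    rw [norm_mul, norm_div, norm_mul, norm_inv, div_eq_mul_inv]
    refine mul_le_mul_of_nonneg_right ?_ (norm_nonneg _)
    calc ‖R ω‖ * ‖p‖⁻¹ ≤ 1 * ‖p‖⁻¹ :=
          mul_le_mul_of_nonneg_right (hRbdd ω) (inv_nonneg.2 (norm_nonneg p))
      _ = ‖p‖⁻¹ := one_mul _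
  have hDstar2 : MemLp Dstar 2 μ := by
    rw [hDstar']
    exact hterm1.add hg2
  have hEDstar : ∫ ω, Dstar ω ∂μ = 0 := by
    have hi1 : Integrable (fun ω => R ω / p * e ω) μ := hterm1.integrable one_le_two
    rw [hDstar', integral_add hi1 hg1, hEg, add_zero]
    have hrw : (fun ω => R ω / p * e ω) = fun ω => (R ω * e ω) / p := by
      funext ω; ring
    rw [hrw, integral_div, hint e heT he1, hEe, mul_zero, zero_div]
  have hIee : Integrable (fun ω => R ω * (e ω * e ω)) μ :=
    (hmul he2 he2).bdd_mul hRm.aestronglyMeasurable (ae_of_all _ hRbdd)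
  have hIeg : Integrable (fun ω => R ω * (e ω * g ω)) μ :=
    (hmul he2 hg2).bdd_mul hRm.aestronglyMeasurable (ae_of_all _ hRbdd)
  have hEDstar2 : ∫ ω, Dstar ω ^ 2 ∂μ
      = (∫ ω, e ω * e ω ∂μ) / p + ∫ ω, g ω * g ω ∂μ := by
    have hfun : (fun ω => Dstar ω ^ 2) = fun ω =>
        (R ω * (e ω * e ω)) / p ^ 2 + (2 * ((R ω * (e ω * g ω)) / p) + g ω * g ω) := by
      funext ω
      rw [hDstar']
      have h2 : (R ω / p * e ω + g ω) ^ 2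
          = (R ω * R ω) * (e ω * e ω) / p ^ 2 + (2 * ((R ω * (e ω * g ω)) / p) + g ω * g ω) := by
        ring
      rw [h2, hR01 ω]
    have hB1 : Integrable (fun ω => 2 * ((R ω * (e ω * g ω)) / p)) μ :=
      (hIeg.div_const p).const_mul 2
    have hB : Integrable (fun ω => 2 * ((R ω * (e ω * g ω)) / p) + g ω * g ω) μ :=
      hB1.add (hmul hg2 hg2)
    rw [hfun, integral_add (hIee.div_const (p ^ 2)) hB,
      integral_add hB1 (hmul hg2 hg2), integral_div, integral_const_mul, integral_div,
      hint (fun ω => e ω * e ω) (heT.mul heT) (hmul he2 he2), hint (fun ω => e ω * g ω) (heT.mul hgT) (hmul he2 hg2), heg]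
    field_simp
    ring
  have hvarDstar : variance Dstar μ
      = (∫ ω, e ω * e ω ∂μ) / p + ∫ ω, g ω * g ω ∂μ := by
    rw [variance_eq_sub hDstar2]
    simp only [Pi.pow_apply]
    rw [hEDstar2, hEDstar]
    ring
  have hggnn : 0 ≤ ∫ ω, g ω * g ω ∂μ := integral_nonneg fun ω => mul_self_nonneg _
  have hggne : ∫ ω, g ω * g ω ∂μ ≠ 0 := by
    intro h0
    have hae := (integral_eq_zero_iff_of_nonneg
      (fun ω => mul_self_nonneg (g ω)) (hmul hg2 hg2)).mp h0
    apply hnc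
    filter_upwards [hae] with ω hω
    exact mul_self_eq_zero.mp hω
  have hggpos : 0 < ∫ ω, g ω * g ω ∂μ := lt_of_le_of_ne hggnn (Ne.symm hggne)
  rw [hvarDstar, hvarCC, hpyth]
  have h1 : 0 < 1 - p := by linarith
  have key : (∫ ω, e ω * e ω ∂μ + ∫ ω, g ω * g ω ∂μ) / p
      - ((∫ ω, e ω * e ω ∂μ) / p + ∫ ω, g ω * g ω ∂μ)
      = (∫ ω, g ω * g ω ∂μ) * (1 - p) / p := by
    field_simp
    ring
  have hposdiff : 0 < (∫ ω, g ω * g ω ∂μ) * (1 - p) / p :=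
    div_pos (mul_pos hggpos h1) hppos
  linarith [key, hposdiff]
end

section
/- Under one-sided noncompliance and the conditional independence R† ⟂ (Z, Y) | A, the complete-case control-arm outcome mean is unbiased: E(Y | Z=0, R†=1) = E(Y | Z=0), provided P(Z=0, R†=1) > 0. -/
open MeasureTheory ProbabilityTheory
open scoped ENNReal

/-- Under one-sided noncompliance and the conditional independence `R† ⟂ (Z, Y) | A`,
the complete-case control-arm outcome mean is unbiased:
`E(Y | Z=0, R†=1) = E(Y | Z=0)`, provided `P(Z=0, R†=1) > 0`. -/
theorem stmt11 {Ω : Type*} [MeasurableSpace Ω] (μ : Measure Ω) [IsProbabilityMeasure μ]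
    (Z A Rdag Y : Ω → ℝ)
    (hZm : Measurable Z) (hAm : Measurable A) (hRdagm : Measurable Rdag) (hYm : Measurable Y)
    (hZbin : ∀ ω, Z ω = 0 ∨ Z ω = 1)
    (hAbin : ∀ ω, A ω = 0 ∨ A ω = 1)
    (hRdagbin : ∀ ω, Rdag ω = 0 ∨ Rdag ω = 1)
    (hYint : Integrable Y μ)
    -- one-sided noncompliance: {Z=0, A=1} is a null event
    (hos : μ {ω | Z ω = 0 ∧ A ω = 1} = 0)
    -- conditional independence R† ⟂ (Z, Y) | A, as a factorization given each {A = a}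
    (hci : ∀ a : ℝ, 0 < μ {ω | A ω = a} →
      ∀ (r z : ℝ) (B : Set ℝ), MeasurableSet B →
        μ ({ω | Rdag ω = r} ∩ {ω | Z ω = z} ∩ {ω | Y ω ∈ B} ∩ {ω | A ω = a}) *
            μ {ω | A ω = a} =
          μ ({ω | Rdag ω = r} ∩ {ω | A ω = a}) *
            μ ({ω | Z ω = z} ∩ {ω | Y ω ∈ B} ∩ {ω | A ω = a}))
    (hZ0pos : 0 < μ {ω | Z ω = 0})
    (hpos : 0 < μ {ω | Z ω = 0 ∧ Rdag ω = 1}) :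
    cexp μ Y {ω | Z ω = 0 ∧ Rdag ω = 1} = cexp μ Y {ω | Z ω = 0} := by
  classical
  set sZ : Set Ω := {ω | Z ω = 0} with hsZdef
  set sA : Set Ω := {ω | A ω = 0} with hsAdef
  set sR : Set Ω := {ω | Rdag ω = 1} with hsRdef
  have hsZm : MeasurableSet sZ := hZm (measurableSet_singleton 0)
  have hsAm : MeasurableSet sA := hAm (measurableSet_singleton 0)
  have hsRm : MeasurableSet sR := hRdagm (measurableSet_singleton 1)
  -- {Z=0} is a.e. contained in {A=0}
  have hae2 : sZ =ᵐ[μ] ((sZ ∩ sA : Set Ω)) := by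
    refine MeasureTheory.ae_eq_set.2 ⟨?_, ?_⟩
    · refine measure_mono_null ?_ hos
      rintro ω ⟨hz, hna⟩
      show Z ω = 0 ∧ A ω = 1
      exact ⟨hz, (hAbin ω).resolve_left (fun h => hna ⟨hz, h⟩)⟩
    · rw [Set.diff_eq_empty.2 Set.inter_subset_left, measure_empty]
  have hae1 : ((sZ ∩ sR : Set Ω)) =ᵐ[μ] ((sR ∩ sZ ∩ sA : Set Ω)) := by
    refine MeasureTheory.ae_eq_set.2 ⟨?_, ?_⟩
    · refine measure_mono_null ?_ hos
      rintro ω ⟨⟨hz, hr⟩, hn⟩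
      show Z ω = 0 ∧ A ω = 1
      exact ⟨hz, (hAbin ω).resolve_left (fun h => hn ⟨⟨hr, hz⟩, h⟩)⟩
    · rw [Set.diff_eq_empty.2 (show (sR ∩ sZ ∩ sA : Set Ω) ⊆ sZ ∩ sR from fun ω h => ⟨h.1.2, h.1.1⟩), measure_empty]
  set S1 : Set Ω := sR ∩ sZ ∩ sA with hS1def
  set S2 : Set Ω := sZ ∩ sA with hS2def
  have hS1m : MeasurableSet S1 := (hsRm.inter hsZm).inter hsAm
  have hS2m : MeasurableSet S2 := hsZm.inter hsAm
  have haApos : 0 < μ sA := by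
    calc 0 < μ sZ := hZ0pos
    _ = μ S2 := measure_congr hae2
    _ ≤ μ sA := measure_mono Set.inter_subset_right
  set a : ℝ≥0∞ := μ sA with hadef
  set k : ℝ≥0∞ := μ (sR ∩ sA) with hkdef
  have hci' : ∀ B : Set ℝ, MeasurableSet B →
      a * μ (Y ⁻¹' B ∩ S1) = k * μ (Y ⁻¹' B ∩ S2) := by
    intro B hB
    have h := hci 0 haApos 1 0 B hB
    have e1 : {ω | Rdag ω = 1} ∩ {ω | Z ω = 0} ∩ {ω | Y ω ∈ B} ∩ {ω | A ω = 0}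
        = Y ⁻¹' B ∩ S1 := by ext ω; simp only [Set.mem_inter_iff, Set.mem_setOf_eq,
          Set.mem_preimage, hS1def, hsRdef, hsZdef, hsAdef]; tauto
    have e2 : {ω | Z ω = 0} ∩ {ω | Y ω ∈ B} ∩ {ω | A ω = 0}
        = Y ⁻¹' B ∩ S2 := by ext ω; simp only [Set.mem_inter_iff, Set.mem_setOf_eq,
          Set.mem_preimage, hS2def, hsZdef, hsAdef]; tauto
    rw [e1, e2] at h
    rw [mul_comm] at h
    exact h.trans rfl
  -- measure-level factorization as an equality of pushforward measures
  have hmeas : a • ((μ.restrict S1).map Y) = k • ((μ.restrict S2).map Y) := by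
    ext B hB
    rw [Measure.smul_apply, Measure.smul_apply, Measure.map_apply hYm hB,
      Measure.map_apply hYm hB, Measure.restrict_apply (hYm hB),
      Measure.restrict_apply (hYm hB), smul_eq_mul, smul_eq_mul]
    exact hci' B hB
  -- integrate the identity against both sides
  have hint : a.toReal * ∫ ω in S1, Y ω ∂μ = k.toReal * ∫ ω in S2, Y ω ∂μ := by
    have h1 : ∫ x, x ∂((μ.restrict S1).map Y) = ∫ ω in S1, Y ω ∂μ :=
      integral_map hYm.aemeasurable aestronglyMeasurable_id
    have h2 : ∫ x, x ∂((μ.restrict S2).map Y) = ∫ ω in S2, Y ω ∂μ :=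
      integral_map hYm.aemeasurable aestronglyMeasurable_id
    have := congrArg (fun ν : Measure ℝ => ∫ x, x ∂ν) hmeas
    simpa [integral_smul_measure, h1, h2, smul_eq_mul] using this
  -- evaluating at univ: measure equality
  have hμeq : a * μ S1 = k * μ S2 := by
    have := hci' Set.univ MeasurableSet.univ
    simpa using this
  -- transfer to the original sets
  have hT1 : {ω | Z ω = 0 ∧ Rdag ω = 1} = sZ ∩ sR := rfl
  have hmT1 : μ (sZ ∩ sR) = μ S1 := measure_congr hae1
  have hmT2 : μ sZ = μ S2 := measure_congr hae2
  have hiT1 : ∫ ω in sZ ∩ sR, Y ω ∂μ = ∫ ω in S1, Y ω ∂μ :=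
    setIntegral_congr_set hae1
  have hiT2 : ∫ ω in sZ, Y ω ∂μ = ∫ ω in S2, Y ω ∂μ :=
    setIntegral_congr_set hae2
  -- positivity / finiteness facts
  have hm1pos : 0 < μ S1 := hmT1 ▸ (by simpa [hT1, Set.setOf_and] using hpos)
  have hm2pos : 0 < μ S2 := hmT2 ▸ hZ0pos
  have hkpos : 0 < k := by
    rcases eq_or_lt_of_le (zero_le : (0:ℝ≥0∞) ≤ k) with h | h
    · exfalso
      have : a * μ S1 = 0 := by rw [hμeq, ← h, zero_mul]
      rcases mul_eq_zero.1 this with h' | h'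
      · exact haApos.ne' h'
      · exact hm1pos.ne' h'
    · exact h
  have hane : a ≠ ⊤ := measure_ne_top μ sA
  have hkne : k ≠ ⊤ := measure_ne_top μ _
  have hm1ne : μ S1 ≠ ⊤ := measure_ne_top μ _
  have hm2ne : μ S2 ≠ ⊤ := measure_ne_top μ _
  have hA : (0:ℝ) < a.toReal := ENNReal.toReal_pos (ne_of_gt haApos) hane
  have hK : (0:ℝ) < k.toReal := ENNReal.toReal_pos (ne_of_gt hkpos) hkne
  have hM1 : (0:ℝ) < (μ S1).toReal := ENNReal.toReal_pos (ne_of_gt hm1pos) hm1ne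
  have hM2 : (0:ℝ) < (μ S2).toReal := ENNReal.toReal_pos (ne_of_gt hm2pos) hm2ne
  have hμeqR : a.toReal * (μ S1).toReal = k.toReal * (μ S2).toReal := by
    rw [← ENNReal.toReal_mul, ← ENNReal.toReal_mul, hμeq]
  -- finish
  unfold cexp
  rw [hT1, hmT1, hiT1, show μ {ω | Z ω = 0} = μ S2 from hmT2,
    show (∫ ω in {ω | Z ω = 0}, Y ω ∂μ) = ∫ ω in S2, Y ω ∂μ from hiT2]
  rw [div_eq_div_iff (ne_of_gt hM1) (ne_of_gt hM2)]
  set I1 := ∫ ω in S1, Y ω ∂μ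
  set I2 := ∫ ω in S2, Y ω ∂μ
  have key : (a.toReal * k.toReal) * (I1 * (μ S2).toReal)
      = (a.toReal * k.toReal) * (I2 * (μ S1).toReal) := by
    linear_combination (k.toReal * (μ S2).toReal) * hint - (k.toReal * I2) * hμeqR
  exact mul_left_cancel₀ (ne_of_gt (mul_pos hA hK)) key
end

section
/- Bias formula for the complete-case estimand under one-sided noncompliance: Ψ† − Ψ^f = α · β · P(R†=0 | Z=1) / E(A | Z=1, R†=1), where α = E(A|Z=1,R†=1) − E(A|Z=1,R†=0), β = E(Y|Z=1,A=1) − E(Y|Z=1,A=0) − Ψ^f, Ψ^f = [E(Y|Z=1) − E(Y|Z=0)]/E(A|Z=1), and Ψ† = [E(Y|Z=1,R†=1) − E(Y|Z=0)]/E(A|Z=1,R†=1). -/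
open MeasureTheory ProbabilityTheory
open scoped ENNReal

/-- Conditional probability `P(s | t)`. -/
noncomputable def cprob {Ω : Type*} [MeasurableSpace Ω] (μ : Measure Ω) (s t : Set Ω) : ℝ :=
  (μ (s ∩ t)).toReal / (μ t).toReal

section Aux

variable {Ω : Type*} [MeasurableSpace Ω]

lemma aux_binInt (μ : Measure Ω) [IsFiniteMeasure μ] (f : Ω → ℝ) (hfm : Measurable f)
    (hbin : ∀ ω, f ω = 0 ∨ f ω = 1) (s : Set Ω) :
    ∫ ω in s, f ω ∂μ = (μ (s ∩ {ω | f ω = 1})).toReal := by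
  have hms : MeasurableSet {ω | f ω = 1} := hfm (measurableSet_singleton 1)
  have hf : ∀ ω, f ω = Set.indicator {ω | f ω = 1} (fun _ => (1:ℝ)) ω := by
    intro ω; rcases hbin ω with h | h <;> simp [Set.indicator, h]
  rw [integral_congr_ae (Filter.Eventually.of_forall hf), integral_indicator hms,
    setIntegral_const, measureReal_def, Measure.restrict_apply hms, Set.inter_comm, smul_eq_mul, mul_one]

lemma aux_split_meas (μ : Measure Ω) [IsFiniteMeasure μ] (g : Ω → ℝ) (hgm : Measurable g)
    (hbin : ∀ ω, g ω = 0 ∨ g ω = 1) (s : Set Ω) (hs : MeasurableSet s) :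
    (μ s).toReal = (μ (s ∩ {ω | g ω = 1})).toReal + (μ (s ∩ {ω | g ω = 0})).toReal := by
  have hm0 : MeasurableSet {ω | g ω = 0} := hgm (measurableSet_singleton 0)
  have hu : s = (s ∩ {ω | g ω = 1}) ∪ (s ∩ {ω | g ω = 0}) := by
    ext ω; simp only [Set.mem_union, Set.mem_inter_iff, Set.mem_setOf_eq]
    rcases hbin ω with h | h <;> tauto
  have hd : Disjoint (s ∩ {ω | g ω = 1}) (s ∩ {ω | g ω = 0}) := by
    rw [Set.disjoint_left]; rintro ω ⟨-, h1⟩ ⟨-, h0⟩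
    simp only [Set.mem_setOf_eq] at h1 h0; rw [h1] at h0; norm_num at h0
  rw [← ENNReal.toReal_add (measure_ne_top _ _) (measure_ne_top _ _),
    ← measure_union hd (hs.inter hm0), ← hu]

lemma aux_split_int (μ : Measure Ω) [IsFiniteMeasure μ] (Y : Ω → ℝ) (hYint : Integrable Y μ)
    (g : Ω → ℝ) (hgm : Measurable g) (hbin : ∀ ω, g ω = 0 ∨ g ω = 1)
    (s : Set Ω) (hs : MeasurableSet s) :
    ∫ ω in s, Y ω ∂μ =
      (∫ ω in s ∩ {ω | g ω = 1}, Y ω ∂μ) + ∫ ω in s ∩ {ω | g ω = 0}, Y ω ∂μ := by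
  have hm0 : MeasurableSet {ω | g ω = 0} := hgm (measurableSet_singleton 0)
  have hu : s = (s ∩ {ω | g ω = 1}) ∪ (s ∩ {ω | g ω = 0}) := by
    ext ω; simp only [Set.mem_union, Set.mem_inter_iff, Set.mem_setOf_eq]
    rcases hbin ω with h | h <;> tauto
  have hd : Disjoint (s ∩ {ω | g ω = 1}) (s ∩ {ω | g ω = 0}) := by
    rw [Set.disjoint_left]; rintro ω ⟨-, h1⟩ ⟨-, h0⟩
    simp only [Set.mem_setOf_eq] at h1 h0; rw [h1] at h0; norm_num at h0
  conv_lhs => rw [hu]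
  exact setIntegral_union hd (hs.inter hm0) hYint.integrableOn hYint.integrableOn

lemma aux_ci (μ : Measure Ω) [IsFiniteMeasure μ] (Z A Rdag Y : Ω → ℝ)
    (hYm : Measurable Y) (a : ℝ) (hA : 0 < μ {ω | A ω = a})
    (hK : ∀ (B : Set ℝ), MeasurableSet B →
      μ ({ω | Rdag ω = 1} ∩ {ω | Z ω = 1} ∩ {ω | Y ω ∈ B} ∩ {ω | A ω = a}) * μ {ω | A ω = a} =
      μ ({ω | Rdag ω = 1} ∩ {ω | A ω = a}) *
        μ ({ω | Z ω = 1} ∩ {ω | Y ω ∈ B} ∩ {ω | A ω = a})) :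
    (μ ({ω | Z ω = 1} ∩ {ω | A ω = a})).toReal *
        (∫ ω in {ω | Rdag ω = 1} ∩ {ω | Z ω = 1} ∩ {ω | A ω = a}, Y ω ∂μ) =
      (μ ({ω | Rdag ω = 1} ∩ {ω | Z ω = 1} ∩ {ω | A ω = a})).toReal *
        (∫ ω in {ω | Z ω = 1} ∩ {ω | A ω = a}, Y ω ∂μ) := by
  set s1 : Set Ω := {ω | Rdag ω = 1} ∩ {ω | Z ω = 1} ∩ {ω | A ω = a} with hs1
  set s2 : Set Ω := {ω | Z ω = 1} ∩ {ω | A ω = a} with hs2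
  have hmap : μ {ω | A ω = a} • Measure.map Y (μ.restrict s1) =
      μ ({ω | Rdag ω = 1} ∩ {ω | A ω = a}) • Measure.map Y (μ.restrict s2) := by
    refine Measure.ext fun B hB => ?_
    rw [Measure.smul_apply, Measure.smul_apply, Measure.map_apply hYm hB,
      Measure.map_apply hYm hB, Measure.restrict_apply (hYm hB),
      Measure.restrict_apply (hYm hB), smul_eq_mul, smul_eq_mul]
    have e1 : Y ⁻¹' B ∩ s1 =
        {ω | Rdag ω = 1} ∩ {ω | Z ω = 1} ∩ {ω | Y ω ∈ B} ∩ {ω | A ω = a} := by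
      ext ω
      simp only [hs1, Set.mem_inter_iff, Set.mem_preimage, Set.mem_setOf_eq]; try tauto
    have e2 : Y ⁻¹' B ∩ s2 = {ω | Z ω = 1} ∩ {ω | Y ω ∈ B} ∩ {ω | A ω = a} := by
      ext ω
      simp only [hs2, Set.mem_inter_iff, Set.mem_preimage, Set.mem_setOf_eq]; try tauto
    rw [e1, e2, mul_comm]
    exact hK B hB
  have hint := congrArg (fun ν : Measure ℝ => ∫ x, x ∂ν) hmap
  simp only [integral_smul_measure] at hint
  have i1 : ∫ x, x ∂(Measure.map Y (μ.restrict s1)) = ∫ ω in s1, Y ω ∂μ :=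
    integral_map hYm.aemeasurable aestronglyMeasurable_id
  have i2 : ∫ x, x ∂(Measure.map Y (μ.restrict s2)) = ∫ ω in s2, Y ω ∂μ :=
    integral_map hYm.aemeasurable aestronglyMeasurable_id
  rw [i1, i2] at hint
  have hcount := hK Set.univ MeasurableSet.univ
  have huniv : {ω | Y ω ∈ Set.univ} = (Set.univ : Set Ω) := by simp
  rw [huniv] at hcount
  simp only [Set.inter_univ, Set.univ_inter] at hcount
  have hcr := congrArg ENNReal.toReal hcount
  rw [ENNReal.toReal_mul, ENNReal.toReal_mul] at hcr
  have hCpos : 0 < (μ {ω | A ω = a}).toReal :=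
    ENNReal.toReal_pos hA.ne' (measure_ne_top _ _)
  simp only [smul_eq_mul] at hint
  refine mul_left_cancel₀ hCpos.ne' ?_
  have e1 : {ω | Rdag ω = 1} ∩ {ω | Z ω = 1} ∩ {ω | A ω = a} = s1 := rfl
  rw [e1] at hcr
  linear_combination (μ s2).toReal * hint - (∫ ω in s2, Y ω ∂μ) * hcr

set_option maxHeartbeats 1000000 in
lemma aux_alg (m p1 p0 q1 q0 n11 n10 n01 J1 J0 J11 J10 IYR IY1 t : ℝ)
    (hm1 : m = p1+p0) (hm2 : m = q1+q0) (hp1 : p1 = n11+n10) (hq1 : q1 = n11+n01)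
    (hc1 : q1*J11 = n11*J1) (hc0 : q0*J10 = n10*J0)
    (hR : IYR = J11 + J10) (hI1 : IY1 = J1 + J0)
    (hp1p : p1>0) (hp0p : p0>0) (hq1p : q1>0) (hq0p : q0>0) (hn11 : n11>0) :
    (IYR/p1 - t)/(n11/p1) - (IY1/m - t)/(q1/m) =
      (n11/p1 - n01/p0)*(J1/q1 - J0/q0 - (IY1/m - t)/(q1/m))*((p0/m)/(n11/p1)) := by
  subst hR hI1
  have hmp : m > 0 := by linarith
  have hJ11 : J11 = n11*J1/q1 := by field_simp; linarith [hc1]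
  have hJ10 : J10 = n10*J0/q0 := by field_simp; linarith [hc0]
  have hq0 : q0 = n10 + p0 - n01 := by linarith
  subst hJ11 hJ10 hm1 hp1 hq1 hq0
  field_simp
  ring

end Aux

/-- Bias formula for the complete-case estimand under one-sided noncompliance:
`Ψ† − Ψᶠ = α·β·P(R†=0 | Z=1)/E(A | Z=1, R†=1)` where
`α = E(A|Z=1,R†=1) − E(A|Z=1,R†=0)`, `β = E(Y|Z=1,A=1) − E(Y|Z=1,A=0) − Ψᶠ`,
`Ψᶠ = [E(Y|Z=1) − E(Y|Z=0)]/E(A|Z=1)` and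
`Ψ† = [E(Y|Z=1,R†=1) − E(Y|Z=0)]/E(A|Z=1,R†=1)`. -/
theorem stmt12 {Ω : Type*} [MeasurableSpace Ω] (μ : Measure Ω) [IsProbabilityMeasure μ]
    (Z A Rdag Y : Ω → ℝ)
    (hZm : Measurable Z) (hAm : Measurable A) (hRdagm : Measurable Rdag) (hYm : Measurable Y)
    (hZbin : ∀ ω, Z ω = 0 ∨ Z ω = 1)
    (hAbin : ∀ ω, A ω = 0 ∨ A ω = 1)
    (hRdagbin : ∀ ω, Rdag ω = 0 ∨ Rdag ω = 1)
    (hYint : Integrable Y μ)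
    -- one-sided noncompliance: {Z=0, A=1} is a null event
    (hos : μ {ω | Z ω = 0 ∧ A ω = 1} = 0)
    -- conditional independence R† ⟂ (Z, Y) | A, as a factorization given each {A = a}
    (hci : ∀ a : ℝ, 0 < μ {ω | A ω = a} →
      ∀ (r z : ℝ) (B : Set ℝ), MeasurableSet B →
        μ ({ω | Rdag ω = r} ∩ {ω | Z ω = z} ∩ {ω | Y ω ∈ B} ∩ {ω | A ω = a}) *
            μ {ω | A ω = a} =
          μ ({ω | Rdag ω = r} ∩ {ω | A ω = a}) *
            μ ({ω | Z ω = z} ∩ {ω | Y ω ∈ B} ∩ {ω | A ω = a}))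
    -- positivity of the conditioning events
    (h1 : 0 < μ {ω | Z ω = 1 ∧ Rdag ω = 1}) (h2 : 0 < μ {ω | Z ω = 1 ∧ Rdag ω = 0})
    (h3 : 0 < μ {ω | Z ω = 1 ∧ A ω = 1}) (h4 : 0 < μ {ω | Z ω = 1 ∧ A ω = 0})
    (h5 : 0 < μ {ω | Z ω = 0})
    (hApos : 0 < cexp μ A {ω | Z ω = 1})
    (hApos' : 0 < cexp μ A {ω | Z ω = 1 ∧ Rdag ω = 1}) :
    (cexp μ Y {ω | Z ω = 1 ∧ Rdag ω = 1} - cexp μ Y {ω | Z ω = 0}) /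
          cexp μ A {ω | Z ω = 1 ∧ Rdag ω = 1} -
        (cexp μ Y {ω | Z ω = 1} - cexp μ Y {ω | Z ω = 0}) / cexp μ A {ω | Z ω = 1} =
      (cexp μ A {ω | Z ω = 1 ∧ Rdag ω = 1} - cexp μ A {ω | Z ω = 1 ∧ Rdag ω = 0}) *
        (cexp μ Y {ω | Z ω = 1 ∧ A ω = 1} - cexp μ Y {ω | Z ω = 1 ∧ A ω = 0} -
          (cexp μ Y {ω | Z ω = 1} - cexp μ Y {ω | Z ω = 0}) / cexp μ A {ω | Z ω = 1}) *
        (cprob μ {ω | Rdag ω = 0} {ω | Z ω = 1} / cexp μ A {ω | Z ω = 1 ∧ Rdag ω = 1}) := by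
  -- measurable sets
  have hmZ : MeasurableSet {ω | Z ω = 1} := hZm (measurableSet_singleton 1)
  have hmS11 : MeasurableSet {ω | Z ω = 1 ∧ Rdag ω = 1} :=
    hmZ.inter (hRdagm (measurableSet_singleton 1))
  have hmS10 : MeasurableSet {ω | Z ω = 1 ∧ Rdag ω = 0} :=
    hmZ.inter (hRdagm (measurableSet_singleton 0))
  have hmT1 : MeasurableSet {ω | Z ω = 1 ∧ A ω = 1} :=
    hmZ.inter (hAm (measurableSet_singleton 1))
  have hmT0 : MeasurableSet {ω | Z ω = 1 ∧ A ω = 0} :=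
    hmZ.inter (hAm (measurableSet_singleton 0))
  -- conditional expectations of the binary A as measure ratios
  have eA11 : cexp μ A {ω | Z ω = 1 ∧ Rdag ω = 1} =
      (μ {ω | Z ω = 1 ∧ Rdag ω = 1 ∧ A ω = 1}).toReal /
        (μ {ω | Z ω = 1 ∧ Rdag ω = 1}).toReal := by
    rw [cexp, aux_binInt μ A hAm hAbin,
      show ({ω | Z ω = 1 ∧ Rdag ω = 1} ∩ {ω | A ω = 1}) =
        {ω | Z ω = 1 ∧ Rdag ω = 1 ∧ A ω = 1} from by
        ext ω; simp only [Set.mem_inter_iff, Set.mem_setOf_eq]; try tauto]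
  have eA10 : cexp μ A {ω | Z ω = 1 ∧ Rdag ω = 0} =
      (μ {ω | Z ω = 1 ∧ Rdag ω = 0 ∧ A ω = 1}).toReal /
        (μ {ω | Z ω = 1 ∧ Rdag ω = 0}).toReal := by
    rw [cexp, aux_binInt μ A hAm hAbin,
      show ({ω | Z ω = 1 ∧ Rdag ω = 0} ∩ {ω | A ω = 1}) =
        {ω | Z ω = 1 ∧ Rdag ω = 0 ∧ A ω = 1} from by
        ext ω; simp only [Set.mem_inter_iff, Set.mem_setOf_eq]; try tauto]
  have eAZ : cexp μ A {ω | Z ω = 1} =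
      (μ {ω | Z ω = 1 ∧ A ω = 1}).toReal / (μ {ω | Z ω = 1}).toReal := by
    rw [cexp, aux_binInt μ A hAm hAbin,
      show ({ω | Z ω = 1} ∩ {ω | A ω = 1}) = {ω | Z ω = 1 ∧ A ω = 1} from by
        ext ω; simp only [Set.mem_inter_iff, Set.mem_setOf_eq]; try tauto]
  have eprob : cprob μ {ω | Rdag ω = 0} {ω | Z ω = 1} =
      (μ {ω | Z ω = 1 ∧ Rdag ω = 0}).toReal / (μ {ω | Z ω = 1}).toReal := by
    rw [cprob, show ({ω | Rdag ω = 0} ∩ {ω | Z ω = 1}) = {ω | Z ω = 1 ∧ Rdag ω = 0} from by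
      ext ω; simp only [Set.mem_inter_iff, Set.mem_setOf_eq]; try tauto]
  -- positivity of real measures
  have hp1p : 0 < (μ {ω | Z ω = 1 ∧ Rdag ω = 1}).toReal :=
    ENNReal.toReal_pos h1.ne' (measure_ne_top _ _)
  have hp0p : 0 < (μ {ω | Z ω = 1 ∧ Rdag ω = 0}).toReal :=
    ENNReal.toReal_pos h2.ne' (measure_ne_top _ _)
  have hq1p : 0 < (μ {ω | Z ω = 1 ∧ A ω = 1}).toReal :=
    ENNReal.toReal_pos h3.ne' (measure_ne_top _ _)
  have hq0p : 0 < (μ {ω | Z ω = 1 ∧ A ω = 0}).toReal :=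
    ENNReal.toReal_pos h4.ne' (measure_ne_top _ _)
  rw [eA11] at hApos'
  have hn11p : 0 < (μ {ω | Z ω = 1 ∧ Rdag ω = 1 ∧ A ω = 1}).toReal := by
    have := mul_pos hApos' hp1p
    rwa [div_mul_cancel₀ _ hp1p.ne'] at this
  -- counting identities
  have hm1 : (μ {ω | Z ω = 1}).toReal =
      (μ {ω | Z ω = 1 ∧ Rdag ω = 1}).toReal + (μ {ω | Z ω = 1 ∧ Rdag ω = 0}).toReal :=
    aux_split_meas μ Rdag hRdagm hRdagbin {ω | Z ω = 1} hmZ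
  have hm2 : (μ {ω | Z ω = 1}).toReal =
      (μ {ω | Z ω = 1 ∧ A ω = 1}).toReal + (μ {ω | Z ω = 1 ∧ A ω = 0}).toReal :=
    aux_split_meas μ A hAm hAbin {ω | Z ω = 1} hmZ
  have hp1s : (μ {ω | Z ω = 1 ∧ Rdag ω = 1}).toReal =
      (μ {ω | Z ω = 1 ∧ Rdag ω = 1 ∧ A ω = 1}).toReal +
        (μ {ω | Z ω = 1 ∧ Rdag ω = 1 ∧ A ω = 0}).toReal := by
    have h := aux_split_meas μ A hAm hAbin {ω | Z ω = 1 ∧ Rdag ω = 1} hmS11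
    rw [show ({ω | Z ω = 1 ∧ Rdag ω = 1} ∩ {ω | A ω = 1}) =
        {ω | Z ω = 1 ∧ Rdag ω = 1 ∧ A ω = 1} from by
        ext ω; simp only [Set.mem_inter_iff, Set.mem_setOf_eq]; try tauto,
      show ({ω | Z ω = 1 ∧ Rdag ω = 1} ∩ {ω | A ω = 0}) =
        {ω | Z ω = 1 ∧ Rdag ω = 1 ∧ A ω = 0} from by
        ext ω; simp only [Set.mem_inter_iff, Set.mem_setOf_eq]; try tauto] at h
    exact h
  have hq1s : (μ {ω | Z ω = 1 ∧ A ω = 1}).toReal =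
      (μ {ω | Z ω = 1 ∧ Rdag ω = 1 ∧ A ω = 1}).toReal +
        (μ {ω | Z ω = 1 ∧ Rdag ω = 0 ∧ A ω = 1}).toReal := by
    have h := aux_split_meas μ Rdag hRdagm hRdagbin {ω | Z ω = 1 ∧ A ω = 1} hmT1
    rw [show ({ω | Z ω = 1 ∧ A ω = 1} ∩ {ω | Rdag ω = 1}) =
        {ω | Z ω = 1 ∧ Rdag ω = 1 ∧ A ω = 1} from by
        ext ω; simp only [Set.mem_inter_iff, Set.mem_setOf_eq]; try tauto,
      show ({ω | Z ω = 1 ∧ A ω = 1} ∩ {ω | Rdag ω = 0}) =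
        {ω | Z ω = 1 ∧ Rdag ω = 0 ∧ A ω = 1} from by
        ext ω; simp only [Set.mem_inter_iff, Set.mem_setOf_eq]; try tauto] at h
    exact h
  -- integral splittings
  have hR : (∫ ω in {ω | Z ω = 1 ∧ Rdag ω = 1}, Y ω ∂μ) =
      (∫ ω in {ω | Z ω = 1 ∧ Rdag ω = 1 ∧ A ω = 1}, Y ω ∂μ) +
        ∫ ω in {ω | Z ω = 1 ∧ Rdag ω = 1 ∧ A ω = 0}, Y ω ∂μ := by
    have h := aux_split_int μ Y hYint A hAm hAbin {ω | Z ω = 1 ∧ Rdag ω = 1} hmS11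
    rw [show ({ω | Z ω = 1 ∧ Rdag ω = 1} ∩ {ω | A ω = 1}) =
        {ω | Z ω = 1 ∧ Rdag ω = 1 ∧ A ω = 1} from by
        ext ω; simp only [Set.mem_inter_iff, Set.mem_setOf_eq]; try tauto,
      show ({ω | Z ω = 1 ∧ Rdag ω = 1} ∩ {ω | A ω = 0}) =
        {ω | Z ω = 1 ∧ Rdag ω = 1 ∧ A ω = 0} from by
        ext ω; simp only [Set.mem_inter_iff, Set.mem_setOf_eq]; try tauto] at h
    exact h
  have hI1 : (∫ ω in {ω | Z ω = 1}, Y ω ∂μ) =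
      (∫ ω in {ω | Z ω = 1 ∧ A ω = 1}, Y ω ∂μ) +
        ∫ ω in {ω | Z ω = 1 ∧ A ω = 0}, Y ω ∂μ := by
    have h := aux_split_int μ Y hYint A hAm hAbin {ω | Z ω = 1} hmZ
    rw [show ({ω | Z ω = 1} ∩ {ω | A ω = 1}) = {ω | Z ω = 1 ∧ A ω = 1} from by
        ext ω; simp only [Set.mem_inter_iff, Set.mem_setOf_eq]; try tauto,
      show ({ω | Z ω = 1} ∩ {ω | A ω = 0}) = {ω | Z ω = 1 ∧ A ω = 0} from by
        ext ω; simp only [Set.mem_inter_iff, Set.mem_setOf_eq]; try tauto] at h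
    exact h
  -- conditional independence consequences
  have hAa : ∀ a : ℝ, 0 < μ {ω | Z ω = 1 ∧ A ω = a} → 0 < μ {ω | A ω = a} := by
    intro a ha
    exact lt_of_lt_of_le ha (measure_mono fun ω h => h.2)
  have hc1 : (μ {ω | Z ω = 1 ∧ A ω = 1}).toReal *
      (∫ ω in {ω | Z ω = 1 ∧ Rdag ω = 1 ∧ A ω = 1}, Y ω ∂μ) =
      (μ {ω | Z ω = 1 ∧ Rdag ω = 1 ∧ A ω = 1}).toReal *
      (∫ ω in {ω | Z ω = 1 ∧ A ω = 1}, Y ω ∂μ) := by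
    have hp := hAa 1 h3
    have h := aux_ci μ Z A Rdag Y hYm 1 hp (fun B hB => hci 1 hp 1 1 B hB)
    rw [show ({ω | Rdag ω = 1} ∩ {ω | Z ω = 1} ∩ {ω | A ω = 1}) =
        {ω | Z ω = 1 ∧ Rdag ω = 1 ∧ A ω = 1} from by
        ext ω; simp only [Set.mem_inter_iff, Set.mem_setOf_eq]; try tauto,
      show ({ω | Z ω = 1} ∩ {ω | A ω = 1}) = {ω | Z ω = 1 ∧ A ω = 1} from by
        ext ω; simp only [Set.mem_inter_iff, Set.mem_setOf_eq]; try tauto] at h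
    exact h
  have hc0 : (μ {ω | Z ω = 1 ∧ A ω = 0}).toReal *
      (∫ ω in {ω | Z ω = 1 ∧ Rdag ω = 1 ∧ A ω = 0}, Y ω ∂μ) =
      (μ {ω | Z ω = 1 ∧ Rdag ω = 1 ∧ A ω = 0}).toReal *
      (∫ ω in {ω | Z ω = 1 ∧ A ω = 0}, Y ω ∂μ) := by
    have hp := hAa 0 h4
    have h := aux_ci μ Z A Rdag Y hYm 0 hp (fun B hB => hci 0 hp 1 1 B hB)
    rw [show ({ω | Rdag ω = 1} ∩ {ω | Z ω = 1} ∩ {ω | A ω = 0}) =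
        {ω | Z ω = 1 ∧ Rdag ω = 1 ∧ A ω = 0} from by
        ext ω; simp only [Set.mem_inter_iff, Set.mem_setOf_eq]; try tauto,
      show ({ω | Z ω = 1} ∩ {ω | A ω = 0}) = {ω | Z ω = 1 ∧ A ω = 0} from by
        ext ω; simp only [Set.mem_inter_iff, Set.mem_setOf_eq]; try tauto] at h
    exact h
  -- finish by algebra
  rw [eA11, eA10, eAZ, eprob]
  simp only [cexp]
  exact aux_alg _ _ _ _ _ _ _ _ _ _ _ _ _ _ _
    hm1 hm2 hp1s hq1s hc1 hc0 hR hI1 hp1p hp0p hq1p hq0p hn11p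
end

section
/- Key decomposition identity used in the bias proof: E(Y | Z=1, R†=1) − E(Y | Z=1) = [E(Y|Z=1,A=1) − E(Y|Z=1,A=0)] · [E(A|Z=1,R†=1) − E(A|Z=1)]. -/
open MeasureTheory ProbabilityTheory
open scoped ENNReal

lemma cexp_mul_toReal {Ω : Type*} [MeasurableSpace Ω] (μ : Measure Ω) [IsFiniteMeasure μ]
    (f : Ω → ℝ) (s : Set Ω) :
    cexp μ f s * (μ s).toReal = ∫ ω in s, f ω ∂μ := by
  rcases eq_or_ne (μ s) 0 with h | h
  · simp [cexp, h, Measure.restrict_eq_zero.2 h]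
  · rw [cexp, div_mul_cancel₀]
    exact ENNReal.toReal_ne_zero.2 ⟨h, measure_ne_top μ s⟩

lemma key_s13 {Ω : Type*} [MeasurableSpace Ω] (μ : Measure Ω) [IsFiniteMeasure μ]
    (A Y : Ω → ℝ) (hAm : Measurable A) (hAbin : ∀ ω, A ω = 0 ∨ A ω = 1)
    (hYint : Integrable Y μ) (S : Set Ω) (hS : MeasurableSet S) (hpos : 0 < μ S) :
    cexp μ Y S = cexp μ Y (S ∩ {ω | A ω = 1}) * cexp μ A S
      + cexp μ Y (S ∩ {ω | A ω = 0}) * (1 - cexp μ A S) := by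
  have hA1 : MeasurableSet {ω | A ω = 1} := hAm (measurableSet_singleton 1)
  have hA0 : MeasurableSet {ω | A ω = 0} := hAm (measurableSet_singleton 0)
  set S1 := S ∩ {ω | A ω = 1} with hS1def
  set S0 := S ∩ {ω | A ω = 0} with hS0def
  have hS1 : MeasurableSet S1 := hS.inter hA1
  have hS0 : MeasurableSet S0 := hS.inter hA0
  have hdisj : Disjoint S1 S0 := by
    rw [Set.disjoint_left]
    rintro ω ⟨_, h1⟩ ⟨_, h0⟩
    simp only [Set.mem_setOf_eq] at h1 h0
    rw [h1] at h0; norm_num at h0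
  have hunion : S1 ∪ S0 = S := by
    ext ω
    simp only [hS1def, hS0def, Set.mem_union, Set.mem_inter_iff, Set.mem_setOf_eq]
    rcases hAbin ω with h | h <;> simp [h]
  have hsplit : ∀ f : Ω → ℝ, Integrable f μ →
      ∫ ω in S, f ω ∂μ = (∫ ω in S1, f ω ∂μ) + ∫ ω in S0, f ω ∂μ := by
    intro f hf
    rw [← hunion, setIntegral_union hdisj hS0 hf.integrableOn hf.integrableOn]
  have hAint : Integrable A μ := by
    refine (integrable_const (1:ℝ)).mono' hAm.aestronglyMeasurable (ae_of_all _ fun ω => ?_)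
    rcases hAbin ω with h | h <;> simp [h]
  -- measures
  have hmS : μ S ≠ ⊤ := measure_ne_top μ S
  have hmadd : (μ S).toReal = (μ S1).toReal + (μ S0).toReal := by
    rw [← ENNReal.toReal_add (measure_ne_top μ S1) (measure_ne_top μ S0),
      ← measure_union hdisj hS0, hunion]
  -- integral of A over S
  have hIA1 : ∫ ω in S1, A ω ∂μ = (μ S1).toReal := by
    rw [setIntegral_congr_fun hS1 (g := fun _ => (1:ℝ)) (fun ω hω => hω.2)]
    simp
    rfl
  have hIA0 : ∫ ω in S0, A ω ∂μ = 0 := by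
    rw [setIntegral_congr_fun hS0 (g := fun _ => (0:ℝ)) (fun ω hω => hω.2)]
    simp
  have hIA : ∫ ω in S, A ω ∂μ = (μ S1).toReal := by
    rw [hsplit A hAint, hIA1, hIA0, add_zero]
  have hm : (0:ℝ) < (μ S).toReal := ENNReal.toReal_pos hpos.ne' hmS
  have hcA : cexp μ A S = (μ S1).toReal / (μ S).toReal := by rw [cexp, hIA]
  have h1A : 1 - cexp μ A S = (μ S0).toReal / (μ S).toReal := by
    rw [hcA]; field_simp; linarith [hmadd]
  have e1 := cexp_mul_toReal μ Y S1
  have e0 := cexp_mul_toReal μ Y S0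
  rw [h1A, hcA, cexp, hsplit Y hYint, ← e1, ← e0]
  field_simp

/-- Key decomposition identity used in the bias proof:
`E(Y | Z=1, R†=1) − E(Y | Z=1)
  = [E(Y|Z=1,A=1) − E(Y|Z=1,A=0)] · [E(A|Z=1,R†=1) − E(A|Z=1)]`. -/
theorem stmt13 {Ω : Type*} [MeasurableSpace Ω] (μ : Measure Ω) [IsProbabilityMeasure μ]
    (Z A Rdag Y : Ω → ℝ)
    (hZm : Measurable Z) (hAm : Measurable A) (hRdagm : Measurable Rdag) (hYm : Measurable Y)
    (hZbin : ∀ ω, Z ω = 0 ∨ Z ω = 1)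
    (hAbin : ∀ ω, A ω = 0 ∨ A ω = 1)
    (hRdagbin : ∀ ω, Rdag ω = 0 ∨ Rdag ω = 1)
    (hYint : Integrable Y μ)
    -- positivity: P(Z=1, A=a) > 0 and P(Z=1, R†=1, A=a) > 0 for a ∈ {0,1}
    (hpos : ∀ a : ℝ, a = 0 ∨ a = 1 →
      0 < μ {ω | Z ω = 1 ∧ A ω = a} ∧ 0 < μ {ω | Z ω = 1 ∧ Rdag ω = 1 ∧ A ω = a})
    -- conditional mean equality implied by R† ⟂ (Z,Y) | A
    (hmean : ∀ a : ℝ, a = 0 ∨ a = 1 →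
      cexp μ Y {ω | Z ω = 1 ∧ A ω = a ∧ Rdag ω = 1} = cexp μ Y {ω | Z ω = 1 ∧ A ω = a}) :
    cexp μ Y {ω | Z ω = 1 ∧ Rdag ω = 1} - cexp μ Y {ω | Z ω = 1} =
      (cexp μ Y {ω | Z ω = 1 ∧ A ω = 1} - cexp μ Y {ω | Z ω = 1 ∧ A ω = 0}) *
        (cexp μ A {ω | Z ω = 1 ∧ Rdag ω = 1} - cexp μ A {ω | Z ω = 1}) := by
  have hZ1 : MeasurableSet {ω | Z ω = 1} := hZm (measurableSet_singleton 1)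
  have hR1 : MeasurableSet {ω | Rdag ω = 1} := hRdagm (measurableSet_singleton 1)
  have hZR : MeasurableSet {ω | Z ω = 1 ∧ Rdag ω = 1} := hZ1.inter hR1
  have hposZ : 0 < μ {ω | Z ω = 1} :=
    lt_of_lt_of_le (hpos 1 (Or.inr rfl)).1 (measure_mono fun ω h => h.1)
  have hposZR : 0 < μ {ω | Z ω = 1 ∧ Rdag ω = 1} :=
    lt_of_lt_of_le (hpos 1 (Or.inr rfl)).2 (measure_mono fun ω h => ⟨h.1, h.2.1⟩)
  have k1 := key_s13 μ A Y hAm hAbin hYint _ hZ1 hposZ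
  have k2 := key_s13 μ A Y hAm hAbin hYint _ hZR hposZR
  have e11 : {ω | Z ω = 1} ∩ {ω | A ω = 1} = {ω | Z ω = 1 ∧ A ω = 1} := rfl
  have e10 : {ω | Z ω = 1} ∩ {ω | A ω = 0} = {ω | Z ω = 1 ∧ A ω = 0} := rfl
  have e21 : {ω | Z ω = 1 ∧ Rdag ω = 1} ∩ {ω | A ω = 1}
      = {ω | Z ω = 1 ∧ A ω = (1:ℝ) ∧ Rdag ω = 1} := by
    ext ω; simp only [Set.mem_inter_iff, Set.mem_setOf_eq]; tauto
  have e20 : {ω | Z ω = 1 ∧ Rdag ω = 1} ∩ {ω | A ω = 0}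
      = {ω | Z ω = 1 ∧ A ω = (0:ℝ) ∧ Rdag ω = 1} := by
    ext ω; simp only [Set.mem_inter_iff, Set.mem_setOf_eq]; tauto
  rw [e11, e10] at k1
  rw [e21, e20, hmean 1 (Or.inr rfl), hmean 0 (Or.inl rfl)] at k2
  rw [k1, k2]; ring
end

section
/- The bias of the complete-case estimand vanishes if either (i) α = 0, i.e., E(A|Z=1,R†=1) = E(A|Z=1,R†=0), or (ii) β = 0, i.e., E(Y|Z=1,A=1) − E(Y|Z=1,A=0) = Ψ^f. That is, under either condition, Ψ† = Ψ^f. -/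
open MeasureTheory ProbabilityTheory
open scoped ENNReal

section aux
variable {Ω : Type*} [MeasurableSpace Ω] {μ : Measure Ω}

lemma binInt (f : Ω → ℝ) (hf : Measurable f) (hbin : ∀ ω, f ω = 0 ∨ f ω = 1)
    (s : Set Ω) :
    ∫ ω in s, f ω ∂μ = (μ (s ∩ {ω | f ω = 1})).toReal := by
  have hset : MeasurableSet {ω | f ω = 1} := hf (measurableSet_singleton 1)
  have hfi : f = Set.indicator {ω | f ω = 1} (fun _ => (1:ℝ)) := by
    funext ω; rcases hbin ω with h | h <;> simp [Set.indicator_apply, h]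
  rw [hfi, integral_indicator hset, setIntegral_const, measureReal_def, Measure.restrict_apply hset,
    Set.inter_comm]
  simp

lemma splitInt (Y A : Ω → ℝ) (hAm : Measurable A) (hAbin : ∀ ω, A ω = 0 ∨ A ω = 1)
    (hYint : Integrable Y μ) (s : Set Ω) (hs : MeasurableSet s) :
    ∫ ω in s, Y ω ∂μ =
      (∫ ω in s ∩ {ω | A ω = 1}, Y ω ∂μ) + ∫ ω in s ∩ {ω | A ω = 0}, Y ω ∂μ := by
  have hm1 : MeasurableSet {ω | A ω = 1} := hAm (measurableSet_singleton 1)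
  have hm0 : MeasurableSet {ω | A ω = 0} := hAm (measurableSet_singleton 0)
  have hu : s = (s ∩ {ω | A ω = 1}) ∪ (s ∩ {ω | A ω = 0}) := by
    ext ω
    simp only [Set.mem_union, Set.mem_inter_iff, Set.mem_setOf_eq]
    rcases hAbin ω with h | h <;> simp [h]
  have hd : Disjoint (s ∩ {ω | A ω = 1}) (s ∩ {ω | A ω = 0}) := by
    rw [Set.disjoint_left]
    rintro ω ⟨_, h1'⟩ ⟨_, h0'⟩
    simp only [Set.mem_setOf_eq] at h1' h0'
    rw [h0'] at h1'; norm_num at h1'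
  conv_lhs => rw [hu]
  exact setIntegral_union hd (hs.inter hm0) hYint.integrableOn hYint.integrableOn

lemma measSplit (μ : Measure Ω) [IsFiniteMeasure μ] (A : Ω → ℝ) (hAm : Measurable A)
    (hAbin : ∀ ω, A ω = 0 ∨ A ω = 1) (s : Set Ω) :
    (μ s).toReal = (μ (s ∩ {ω | A ω = 1})).toReal + (μ (s ∩ {ω | A ω = 0})).toReal := by
  have hAc : {ω | A ω = 0} = {ω | A ω = 1}ᶜ := by
    ext ω; rcases hAbin ω with h | h <;> simp [h]
  rw [hAc, ← ENNReal.toReal_add (measure_ne_top _ _) (measure_ne_top _ _),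
    ← Set.diff_eq, measure_inter_add_diff s
      (show MeasurableSet {ω | A ω = 1} from hAm (measurableSet_singleton 1))]

lemma ciKey (μ : Measure Ω) [IsFiniteMeasure μ] (Y : Ω → ℝ) (hYm : Measurable Y)
    (s u t : Set Ω) (hμt : 0 < μ t)
    (hfac : ∀ (B : Set ℝ), MeasurableSet B →
      μ (s ∩ u ∩ {ω | Y ω ∈ B} ∩ t) * μ t = μ (s ∩ t) * μ (u ∩ {ω | Y ω ∈ B} ∩ t)) :
    (∫ ω in s ∩ u ∩ t, Y ω ∂μ) * (μ (u ∩ t)).toReal =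
      (μ (s ∩ u ∩ t)).toReal * ∫ ω in u ∩ t, Y ω ∂μ := by
  have hmeq : μ t • (μ.restrict (s ∩ u ∩ t)).map Y
      = μ (s ∩ t) • (μ.restrict (u ∩ t)).map Y := by
    ext B hB
    rw [Measure.smul_apply, Measure.smul_apply, Measure.map_apply hYm hB,
      Measure.map_apply hYm hB, Measure.restrict_apply (hYm hB),
      Measure.restrict_apply (hYm hB)]
    have e1 : Y ⁻¹' B ∩ (s ∩ u ∩ t) = s ∩ u ∩ {ω | Y ω ∈ B} ∩ t := by
      ext ω; simp only [Set.mem_inter_iff, Set.mem_preimage, Set.mem_setOf_eq]; tauto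
    have e2 : Y ⁻¹' B ∩ (u ∩ t) = u ∩ {ω | Y ω ∈ B} ∩ t := by
      ext ω; simp only [Set.mem_inter_iff, Set.mem_preimage, Set.mem_setOf_eq]; tauto
    rw [e1, e2]
    simpa [smul_eq_mul, mul_comm] using hfac B hB
  have hInt := congrArg (fun ν : Measure ℝ => ∫ x, x ∂ν) hmeq
  simp only [integral_smul_measure, smul_eq_mul] at hInt
  have him : ∀ ν : Measure Ω, (∫ x, x ∂(Measure.map Y ν)) = ∫ ω, Y ω ∂ν := fun ν =>
    integral_map hYm.aemeasurable aestronglyMeasurable_id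
  rw [him, him] at hInt
  have hMes := hfac Set.univ MeasurableSet.univ
  simp only [Set.mem_univ, Set.setOf_true, Set.inter_univ] at hMes
  have hMr : (μ (s ∩ u ∩ t)).toReal * (μ t).toReal
      = (μ (s ∩ t)).toReal * (μ (u ∩ t)).toReal := by
    rw [← ENNReal.toReal_mul, ← ENNReal.toReal_mul, hMes]
  have hmne : (μ t).toReal ≠ 0 :=
    (ENNReal.toReal_pos hμt.ne' (measure_ne_top _ _)).ne'
  apply mul_right_cancel₀ hmne
  linear_combination (μ (u ∩ t)).toReal * hInt - (∫ ω in u ∩ t, Y ω ∂μ) * hMr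

end aux

/-- The bias of the complete-case estimand vanishes if either (i) `α = 0`, i.e.
`E(A|Z=1,R†=1) = E(A|Z=1,R†=0)`, or (ii) `β = 0`, i.e.
`E(Y|Z=1,A=1) − E(Y|Z=1,A=0) = Ψᶠ`.  Under either condition, `Ψ† = Ψᶠ`. -/
theorem stmt15 {Ω : Type*} [MeasurableSpace Ω] (μ : Measure Ω) [IsProbabilityMeasure μ]
    (Z A Rdag Y : Ω → ℝ)
    (hZm : Measurable Z) (hAm : Measurable A) (hRdagm : Measurable Rdag) (hYm : Measurable Y)
    (hZbin : ∀ ω, Z ω = 0 ∨ Z ω = 1)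
    (hAbin : ∀ ω, A ω = 0 ∨ A ω = 1)
    (hRdagbin : ∀ ω, Rdag ω = 0 ∨ Rdag ω = 1)
    (hYint : Integrable Y μ)
    -- one-sided noncompliance: {Z=0, A=1} is a null event
    (hos : μ {ω | Z ω = 0 ∧ A ω = 1} = 0)
    -- conditional independence R† ⟂ (Z, Y) | A, as a factorization given each {A = a}
    (hci : ∀ a : ℝ, 0 < μ {ω | A ω = a} →
      ∀ (r z : ℝ) (B : Set ℝ), MeasurableSet B →
        μ ({ω | Rdag ω = r} ∩ {ω | Z ω = z} ∩ {ω | Y ω ∈ B} ∩ {ω | A ω = a}) *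
            μ {ω | A ω = a} =
          μ ({ω | Rdag ω = r} ∩ {ω | A ω = a}) *
            μ ({ω | Z ω = z} ∩ {ω | Y ω ∈ B} ∩ {ω | A ω = a}))
    -- positivity of the conditioning events
    (h1 : 0 < μ {ω | Z ω = 1 ∧ Rdag ω = 1}) (h2 : 0 < μ {ω | Z ω = 1 ∧ Rdag ω = 0})
    (h3 : 0 < μ {ω | Z ω = 1 ∧ A ω = 1}) (h4 : 0 < μ {ω | Z ω = 1 ∧ A ω = 0})
    (h5 : 0 < μ {ω | Z ω = 0})
    (hApos : 0 < cexp μ A {ω | Z ω = 1})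
    (hApos' : 0 < cexp μ A {ω | Z ω = 1 ∧ Rdag ω = 1})
    -- either α = 0 or β = 0
    (hab : cexp μ A {ω | Z ω = 1 ∧ Rdag ω = 1} = cexp μ A {ω | Z ω = 1 ∧ Rdag ω = 0} ∨
      cexp μ Y {ω | Z ω = 1 ∧ A ω = 1} - cexp μ Y {ω | Z ω = 1 ∧ A ω = 0} =
        (cexp μ Y {ω | Z ω = 1} - cexp μ Y {ω | Z ω = 0}) / cexp μ A {ω | Z ω = 1}) :
    (cexp μ Y {ω | Z ω = 1 ∧ Rdag ω = 1} - cexp μ Y {ω | Z ω = 0}) /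
        cexp μ A {ω | Z ω = 1 ∧ Rdag ω = 1} =
      (cexp μ Y {ω | Z ω = 1} - cexp μ Y {ω | Z ω = 0}) / cexp μ A {ω | Z ω = 1} := by
  simp only [Set.setOf_and] at h1 h2 h3 h4 hApos' hab ⊢
  have mZ1 : MeasurableSet {ω | Z ω = 1} := hZm (measurableSet_singleton 1)
  have mR1 : MeasurableSet {ω | Rdag ω = 1} := hRdagm (measurableSet_singleton 1)
  have mR0 : MeasurableSet {ω | Rdag ω = 0} := hRdagm (measurableSet_singleton 0)
  have mA1 : MeasurableSet {ω | A ω = 1} := hAm (measurableSet_singleton 1)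
  have mA0 : MeasurableSet {ω | A ω = 0} := hAm (measurableSet_singleton 0)
  set c := cexp μ Y {ω | Z ω = 0} with hcd
  set S := (μ {ω | Z ω = 1}).toReal with hSd
  set T := (μ ({ω | Z ω = 1} ∩ {ω | Rdag ω = 1})).toReal with hTd
  set T' := (μ ({ω | Z ω = 1} ∩ {ω | Rdag ω = 0})).toReal with hT'd
  set P1 := (μ ({ω | Z ω = 1} ∩ {ω | A ω = 1})).toReal with hP1d
  set P0 := (μ ({ω | Z ω = 1} ∩ {ω | A ω = 0})).toReal with hP0d
  set Q1 := (μ ({ω | Z ω = 1} ∩ {ω | Rdag ω = 1} ∩ {ω | A ω = 1})).toReal with hQ1d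
  set Q0 := (μ ({ω | Z ω = 1} ∩ {ω | Rdag ω = 1} ∩ {ω | A ω = 0})).toReal with hQ0d
  set Q1' := (μ ({ω | Z ω = 1} ∩ {ω | Rdag ω = 0} ∩ {ω | A ω = 1})).toReal with hQ1'd
  set Q0' := (μ ({ω | Z ω = 1} ∩ {ω | Rdag ω = 0} ∩ {ω | A ω = 0})).toReal with hQ0'd
  set I1 := ∫ ω in {ω | Z ω = 1} ∩ {ω | A ω = 1}, Y ω ∂μ with hI1d
  set I0 := ∫ ω in {ω | Z ω = 1} ∩ {ω | A ω = 0}, Y ω ∂μ with hI0d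
  set J1 := ∫ ω in {ω | Z ω = 1} ∩ {ω | Rdag ω = 1} ∩ {ω | A ω = 1}, Y ω ∂μ with hJ1d
  set J0 := ∫ ω in {ω | Z ω = 1} ∩ {ω | Rdag ω = 1} ∩ {ω | A ω = 0}, Y ω ∂μ with hJ0d
  -- expansions of the conditional expectations
  have eYT : cexp μ Y ({ω | Z ω = 1} ∩ {ω | Rdag ω = 1}) = (J1 + J0) / T := by
    rw [cexp, splitInt Y A hAm hAbin hYint _ (mZ1.inter mR1)]
  have eYS : cexp μ Y {ω | Z ω = 1} = (I1 + I0) / S := by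
    rw [cexp, splitInt Y A hAm hAbin hYint _ mZ1]
  have eAT : cexp μ A ({ω | Z ω = 1} ∩ {ω | Rdag ω = 1}) = Q1 / T := by
    rw [cexp, binInt A hAm hAbin]
  have eAT' : cexp μ A ({ω | Z ω = 1} ∩ {ω | Rdag ω = 0}) = Q1' / T' := by
    rw [cexp, binInt A hAm hAbin]
  have eAS : cexp μ A {ω | Z ω = 1} = P1 / S := by
    rw [cexp, binInt A hAm hAbin]
  have eY1 : cexp μ Y ({ω | Z ω = 1} ∩ {ω | A ω = 1}) = I1 / P1 := by rw [cexp]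
  have eY0 : cexp μ Y ({ω | Z ω = 1} ∩ {ω | A ω = 0}) = I0 / P0 := by rw [cexp]
  rw [eAT, eAT', eY1, eY0, eYS, eAS] at hab
  rw [eAT] at hApos'
  rw [eYT, eAT, eYS, eAS]
  -- basic measure-splitting facts
  have hTQ : T = Q1 + Q0 := measSplit μ A hAm hAbin _
  have hT'Q : T' = Q1' + Q0' := measSplit μ A hAm hAbin _
  have hSP : S = P1 + P0 := measSplit μ A hAm hAbin _
  have hP1Q : P1 = Q1 + Q1' := by
    have h := measSplit μ Rdag hRdagm hRdagbin ({ω | Z ω = 1} ∩ {ω | A ω = 1})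
    rw [Set.inter_right_comm _ _ {ω | Rdag ω = 1},
      Set.inter_right_comm _ _ {ω | Rdag ω = 0}] at h
    exact h
  have hP0Q : P0 = Q0 + Q0' := by
    have h := measSplit μ Rdag hRdagm hRdagbin ({ω | Z ω = 1} ∩ {ω | A ω = 0})
    rw [Set.inter_right_comm _ _ {ω | Rdag ω = 1},
      Set.inter_right_comm _ _ {ω | Rdag ω = 0}] at h
    exact h
  -- positivity
  have hTpos : 0 < T := ENNReal.toReal_pos h1.ne' (measure_ne_top _ _)
  have hT'pos : 0 < T' := ENNReal.toReal_pos h2.ne' (measure_ne_top _ _)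
  have hP1pos : 0 < P1 := ENNReal.toReal_pos h3.ne' (measure_ne_top _ _)
  have hP0pos : 0 < P0 := ENNReal.toReal_pos h4.ne' (measure_ne_top _ _)
  have hSpos : 0 < S := ENNReal.toReal_pos
    (lt_of_lt_of_le h3 (measure_mono Set.inter_subset_left)).ne' (measure_ne_top _ _)
  have hQ1pos : 0 < Q1 := by
    have h := mul_pos hApos' hTpos
    rwa [div_mul_cancel₀ _ hTpos.ne'] at h
  -- the conditional independence consequences
  have hcomm : {ω | Rdag ω = 1} ∩ {ω | Z ω = 1} = {ω | Z ω = 1} ∩ {ω | Rdag ω = 1} :=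
    Set.inter_comm _ _
  have hJ1 : J1 * P1 = Q1 * I1 := by
    have hA1pos : 0 < μ {ω | A ω = 1} :=
      lt_of_lt_of_le h3 (measure_mono Set.inter_subset_right)
    have h := ciKey μ Y hYm {ω | Rdag ω = 1} {ω | Z ω = 1} {ω | A ω = 1} hA1pos
      (fun B hB => hci 1 hA1pos 1 1 B hB)
    rw [hcomm] at h
    exact h
  have hJ0 : J0 * P0 = Q0 * I0 := by
    have hA0pos : 0 < μ {ω | A ω = 0} :=
      lt_of_lt_of_le h4 (measure_mono Set.inter_subset_right)
    have h := ciKey μ Y hYm {ω | Rdag ω = 1} {ω | Z ω = 1} {ω | A ω = 0} hA0pos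
      (fun B hB => hci 0 hA0pos 1 1 B hB)
    rw [hcomm] at h
    exact h
  -- the key algebraic identity
  have hkey : (J1 + J0 - c * T) * P1 = (I1 + I0 - c * S) * Q1 := by
    rcases hab with hα | hβ
    · rw [div_eq_div_iff hTpos.ne' hT'pos.ne'] at hα
      have hQP : Q0 * P1 = Q1 * P0 := by
        linear_combination Q0 * hP1Q - Q1 * hP0Q - hα + Q1 * hT'Q - Q1' * hTQ
      apply mul_right_cancel₀ hP0pos.ne'
      linear_combination P0 * hJ1 + P1 * hJ0 + (I0 - c * P0) * hQP
        - c * P1 * P0 * hTQ + c * Q1 * P0 * hSP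
    · have hβ' : ((I1 + I0) / S - c) / (P1 / S) = (I1 + I0 - c * S) / P1 := by
        field_simp
      rw [hβ', div_sub_div _ _ hP1pos.ne' hP0pos.ne',
        div_eq_div_iff (mul_ne_zero hP1pos.ne' hP0pos.ne') hP1pos.ne'] at hβ
      have hI0e : I0 = c * P0 := by
        apply mul_right_cancel₀ (mul_ne_zero hP1pos.ne' hSpos.ne')
        linear_combination -hβ + I0 * P1 * hSP
      apply mul_right_cancel₀ hP0pos.ne'
      linear_combination P0 * hJ1 + P1 * hJ0 + (Q0 * P1 - Q1 * P0) * hI0e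
        - c * P1 * P0 * hTQ + c * Q1 * P0 * hSP
  have gl : ((J1 + J0) / T - c) / (Q1 / T) = (J1 + J0 - c * T) / Q1 := by
    field_simp
  have gr : ((I1 + I0) / S - c) / (P1 / S) = (I1 + I0 - c * S) / P1 := by
    field_simp
  rw [gl, gr, div_eq_div_iff hQ1pos.ne' hP1pos.ne']
  exact hkey
end
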